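/- arXiv:1608.02486 — 8 statements merged into one kernel-verified Lean document; each statement's English description precedes it below -/
import Mathlib

section
/- Let L be a Lie ring and let x₁, x₂, x₃, x₄ ∈ L. Then the sum of ⁅x_{σ(1)}, ⁅x_{σ(2)}, ⁅x_{σ(3)}, x_{σ(4)}⁆⁆⁆ over the twelve even permutations σ of {1,2,3,4} vanishes; explicitly, ⁅x₁,⁅x₂,⁅x₃,x₄⁆⁆⁆ + ⁅x₁,⁅x₃,⁅x₄,x₂⁆⁆⁆ + ⁅x₁,⁅x₄,⁅x₂,x₃⁆⁆⁆ + ⁅x₂,⁅x₁,⁅x₄,x₃⁆⁆⁆ + ⁅x₂,⁅x₃,⁅x₁,x₄⁆⁆⁆ + ⁅x₂,⁅x₄,⁅x₃,x₁⁆⁆⁆ + ⁅x₃,⁅x₁,⁅x₂,x₄⁆⁆⁆ + ⁅x₃,⁅x₂,⁅x₄,x₁⁆⁆⁆ + ⁅x₃,⁅x₄,⁅x₁,x₂⁆⁆⁆ + ⁅x₄,⁅x₁,⁅x₃,x₂⁆⁆⁆ + ⁅x₄,⁅x₂,⁅x₁,x₃⁆⁆⁆ + ⁅x₄,⁅x₃,⁅x₂,x₁⁆⁆⁆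 = 0. -/
/-- The four-dimensional analogue of the Jacobi identity in a Lie ring: the sum of
`⁅x_{σ 1}, ⁅x_{σ 2}, ⁅x_{σ 3}, x_{σ 4}⁆⁆⁆` over the twelve even permutations `σ` of
`{1,2,3,4}` vanishes. -/
theorem four_dim_jacobi_lieRing {L : Type*} [LieRing L] (x₁ x₂ x₃ x₄ : L) :
    ⁅x₁, ⁅x₂, ⁅x₃, x₄⁆⁆⁆ + ⁅x₁, ⁅x₃, ⁅x₄, x₂⁆⁆⁆ + ⁅x₁, ⁅x₄, ⁅x₂, x₃⁆⁆⁆ +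
      ⁅x₂, ⁅x₁, ⁅x₄, x₃⁆⁆⁆ + ⁅x₂, ⁅x₃, ⁅x₁, x₄⁆⁆⁆ + ⁅x₂, ⁅x₄, ⁅x₃, x₁⁆⁆⁆ +
      ⁅x₃, ⁅x₁, ⁅x₂, x₄⁆⁆⁆ + ⁅x₃, ⁅x₂, ⁅x₄, x₁⁆⁆⁆ + ⁅x₃, ⁅x₄, ⁅x₁, x₂⁆⁆⁆ +
      ⁅x₄, ⁅x₁, ⁅x₃, x₂⁆⁆⁆ + ⁅x₄, ⁅x₂, ⁅x₁, x₃⁆⁆⁆ + ⁅x₄, ⁅x₃, ⁅x₂, x₁⁆⁆⁆ = 0 := by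
  have h₁ : ⁅x₁, ⁅x₂, ⁅x₃, x₄⁆⁆ + ⁅x₃, ⁅x₄, x₂⁆⁆ + ⁅x₄, ⁅x₂, x₃⁆⁆⁆ = (0 : L) := by
    rw [lie_jacobi, lie_zero]
  have h₂ : ⁅x₂, ⁅x₁, ⁅x₄, x₃⁆⁆ + ⁅x₄, ⁅x₃, x₁⁆⁆ + ⁅x₃, ⁅x₁, x₄⁆⁆⁆ = (0 : L) := by
    rw [lie_jacobi, lie_zero]
  have h₃ : ⁅x₃, ⁅x₁, ⁅x₂, x₄⁆⁆ + ⁅x₂, ⁅x₄, x₁⁆⁆ + ⁅x₄, ⁅x₁, x₂⁆⁆⁆ = (0 : L) := by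
    rw [lie_jacobi, lie_zero]
  have h₄ : ⁅x₄, ⁅x₁, ⁅x₃, x₂⁆⁆ + ⁅x₃, ⁅x₂, x₁⁆⁆ + ⁅x₂, ⁅x₁, x₃⁆⁆⁆ = (0 : L) := by
    rw [lie_jacobi, lie_zero]
  simp only [lie_add] at h₁ h₂ h₃ h₄
  rw [show ⁅x₁, ⁅x₂, ⁅x₃, x₄⁆⁆⁆ + ⁅x₁, ⁅x₃, ⁅x₄, x₂⁆⁆⁆ + ⁅x₁, ⁅x₄, ⁅x₂, x₃⁆⁆⁆ + ⁅x₂, ⁅x₁, ⁅x₄, x₃⁆⁆⁆ + ⁅x₂, ⁅x₃, ⁅x₁, x₄⁆⁆⁆ + ⁅x₂, ⁅x₄, ⁅x₃, x₁⁆⁆⁆ + ⁅x₃, ⁅x₁, ⁅x₂, x₄⁆⁆⁆ + ⁅x₃, ⁅x₂, ⁅x₄, x₁⁆⁆⁆ + ⁅x₃, ⁅x₄, ⁅x₁, x₂⁆⁆⁆ + ⁅x₄, ⁅x₁, ⁅x₃, x₂⁆⁆⁆ + ⁅x₄, ⁅x₂, ⁅x₁, x₃⁆⁆⁆ + ⁅x₄,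 ⁅x₃, ⁅x₂, x₁⁆⁆⁆ = (⁅x₁, ⁅x₂, ⁅x₃, x₄⁆⁆⁆ + ⁅x₁, ⁅x₃, ⁅x₄, x₂⁆⁆⁆ + ⁅x₁, ⁅x₄, ⁅x₂, x₃⁆⁆⁆) + (⁅x₂, ⁅x₁, ⁅x₄, x₃⁆⁆⁆ + ⁅x₂, ⁅x₄, ⁅x₃, x₁⁆⁆⁆ + ⁅x₂, ⁅x₃, ⁅x₁, x₄⁆⁆⁆) + ((⁅x₃, ⁅x₁, ⁅x₂, x₄⁆⁆⁆ + ⁅x₃, ⁅x₂, ⁅x₄, x₁⁆⁆⁆ + ⁅x₃, ⁅x₄, ⁅x₁, x₂⁆⁆⁆) + (⁅x₄, ⁅x₁, ⁅x₃, x₂⁆⁆⁆ + ⁅x₄, ⁅x₃, ⁅x₂, x₁⁆⁆⁆ + ⁅x₄, ⁅x₂, ⁅x₁, x₃⁆⁆⁆)) from by abel, h₁, h₂, h₃, h₄]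

  simp
end

section
/- Let R be a commutative ring, L a Lie algebra over R, and x : Fin 4 → L any function. Then the sum over all σ in the alternating group of Fin 4 of ⁅x(σ 0), ⁅x(σ 1), ⁅x(σ 2), x(σ 3)⁆⁆⁆ equals 0. -/
/-- The twelve even permutations of `Fin 4`, listed explicitly. -/
def evenPermList : Fin 12 → Equiv.Perm (Fin 4)
  | 0 => 1
  | 1 => Equiv.swap 0 1 * Equiv.swap 2 3
  | 2 => Equiv.swap 0 2 * Equiv.swap 1 3
  | 3 => Equiv.swap 0 3 * Equiv.swap 1 2
  | 4 => Equiv.swap 0 1 * Equiv.swap 1 2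
  | 5 => Equiv.swap 0 2 * Equiv.swap 2 1
  | 6 => Equiv.swap 0 1 * Equiv.swap 1 3
  | 7 => Equiv.swap 0 3 * Equiv.swap 3 1
  | 8 => Equiv.swap 0 2 * Equiv.swap 2 3
  | 9 => Equiv.swap 0 3 * Equiv.swap 3 2
  | 10 => Equiv.swap 1 2 * Equiv.swap 2 3
  | 11 => Equiv.swap 1 3 * Equiv.swap 3 2

/-- The even permutations, as elements of the alternating group. -/
def evenPermEnum (i : Fin 12) : alternatingGroup (Fin 4) :=
  ⟨evenPermList i, by rw [Equiv.Perm.mem_alternatingGroup]; revert i; decide⟩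

/-- The sum over all even permutations `σ` of `Fin 4` of the iterated brackets
`⁅x (σ 0), ⁅x (σ 1), ⁅x (σ 2), x (σ 3)⁆⁆⁆` vanishes in any Lie algebra `L`
over a commutative ring `R`. -/
theorem sum_alternatingGroup_jacobi {R : Type*} [CommRing R] {L : Type*} [LieRing L]
    [LieAlgebra R L] (x : Fin 4 → L) :
    ∑ σ : alternatingGroup (Fin 4),
      ⁅x ((σ : Equiv.Perm (Fin 4)) 0),
        ⁅x ((σ : Equiv.Perm (Fin 4)) 1),
          ⁅x ((σ : Equiv.Perm (Fin 4)) 2), x ((σ : Equiv.Perm (Fin 4)) 3)⁆⁆⁆ = 0 := by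
  have k1 : ∀ a b c d : L, ⁅a,⁅b,⁅c,d⁆⁆⁆ + ⁅b,⁅a,⁅d,c⁆⁆⁆ = ⁅⁅a,b⁆,⁅c,d⁆⁆ := by
    intro a b c d
    rw [lie_lie, ← lie_skew d c]; simp only [lie_neg]; abel
  have c1 : ∀ u v : L, ⁅u,v⁆ + ⁅v,u⁆ = 0 := by
    intro u v; rw [← lie_skew u v]; abel
  set a := x 0; set b := x 1; set c := x 2; set d := x 3
  rw [← Fintype.sum_bijective evenPermEnum (by decide) _ _ (fun i => rfl)]
  simp only [Fin.sum_univ_succ, Fin.sum_univ_zero, add_zero]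
  show ⁅a, ⁅b, ⁅c, d⁆⁆⁆ + (⁅b, ⁅a, ⁅d, c⁆⁆⁆ +
    (⁅c, ⁅d, ⁅a, b⁆⁆⁆ + (⁅d, ⁅c, ⁅b, a⁆⁆⁆ +
    (⁅b, ⁅c, ⁅a, d⁆⁆⁆ + (⁅c, ⁅a, ⁅b, d⁆⁆⁆ +
    (⁅b, ⁅d, ⁅c, a⁆⁆⁆ + (⁅d, ⁅a, ⁅c, b⁆⁆⁆ +
    (⁅c, ⁅b, ⁅d, a⁆⁆⁆ + (⁅d, ⁅b, ⁅a, c⁆⁆⁆ +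
    (⁅a, ⁅c, ⁅d, b⁆⁆⁆ + ⁅a, ⁅d, ⁅b, c⁆⁆⁆)))))))))) = 0
  have g3 : ⁅⁅a,c⁆,⁅d,b⁆⁆ + ⁅⁅b,d⁆,⁅c,a⁆⁆ = 0 := by
    rw [← lie_skew d b, ← lie_skew c a, lie_neg, lie_neg,
      ← lie_skew (⁅a,c⁆) (⁅b,d⁆)]; abel
  calc ⁅a, ⁅b, ⁅c, d⁆⁆⁆ + (⁅b, ⁅a, ⁅d, c⁆⁆⁆ +
      (⁅c, ⁅d, ⁅a, b⁆⁆⁆ + (⁅d, ⁅c, ⁅b, a⁆⁆⁆ +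
      (⁅b, ⁅c, ⁅a, d⁆⁆⁆ + (⁅c, ⁅a, ⁅b, d⁆⁆⁆ +
      (⁅b, ⁅d, ⁅c, a⁆⁆⁆ + (⁅d, ⁅a, ⁅c, b⁆⁆⁆ +
      (⁅c, ⁅b, ⁅d, a⁆⁆⁆ + (⁅d, ⁅b, ⁅a, c⁆⁆⁆ +
      (⁅a, ⁅c, ⁅d, b⁆⁆⁆ + ⁅a, ⁅d, ⁅b, c⁆⁆⁆))))))))))
      = (⁅a,⁅b,⁅c,d⁆⁆⁆ + ⁅b,⁅a,⁅d,c⁆⁆⁆) + (⁅c,⁅d,⁅a,b⁆⁆⁆ + ⁅d,⁅c,⁅b,a⁆⁆⁆) +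
        ((⁅b,⁅c,⁅a,d⁆⁆⁆ + ⁅c,⁅b,⁅d,a⁆⁆⁆) + (⁅a,⁅d,⁅b,c⁆⁆⁆ + ⁅d,⁅a,⁅c,b⁆⁆⁆)) +
        ((⁅a,⁅c,⁅d,b⁆⁆⁆ + ⁅c,⁅a,⁅b,d⁆⁆⁆) + (⁅b,⁅d,⁅c,a⁆⁆⁆ + ⁅d,⁅b,⁅a,c⁆⁆⁆)) := by
          abel
    _ = (⁅⁅a,b⁆,⁅c,d⁆⁆ + ⁅⁅c,d⁆,⁅a,b⁆⁆) + ((⁅⁅b,c⁆,⁅a,d⁆⁆ + ⁅⁅a,d⁆,⁅b,c⁆⁆)) +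
        (⁅⁅a,c⁆,⁅d,b⁆⁆ + ⁅⁅b,d⁆,⁅c,a⁆⁆) := by
          rw [k1 a b c d, k1 c d a b, k1 b c a d, k1 a d b c, k1 a c d b, k1 b d c a]
    _ = 0 := by rw [c1 (⁅a,b⁆) (⁅c,d⁆), c1 (⁅b,c⁆) (⁅a,d⁆), g3]; abel
end

section
/- Let R be a commutative ring, B = R[x,y]/(x², y²) and A = R[x,y,z]/(x², y², z², xz, yz). Let φ₁, φ₂ : A → B be the R-algebra homomorphisms determined by φ₁(x) = x, φ₁(y) = y, φ₁(z) = xy and φ₂(x) = x, φ₂(y) = y, φ₂(z) = 0 (both well defined). Then for any b₁, b₂ ∈ B whose difference b₁ − b₂ lies in the ideal of B generated by xy, there exists a unique a ∈ A with φ₁(a) = b₁ and φ₂(a) = b₂. -/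
open MvPolynomial

/-- The ideal `(x², y², z², xz, yz)` of `R[x,y,z]`, so that the quotient is the
function algebra `A` of the infinitesimal object `D³{(1,3),(2,3)}`. -/
noncomputable def idealA (R : Type*) [CommRing R] : Ideal (MvPolynomial (Fin 3) R) :=
  Ideal.span {X 0 ^ 2, X 1 ^ 2, X 2 ^ 2, X 0 * X 2, X 1 * X 2}

/-- The ideal `(x², y²)` of `R[x,y]`, so that the quotient is the function algebra `B`
of the infinitesimal object `D²`. -/
noncomputable def idealB (R : Type*) [CommRing R] : Ideal (MvPolynomial (Fin 2) R) :=
  Ideal.span {X 0 ^ 2, X 1 ^ 2}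

section Aux

variable {R : Type*} [CommRing R]

/-- Embedding `R[x,y] → R[x,y,z]`. -/
noncomputable def embP : MvPolynomial (Fin 2) R →ₐ[R] MvPolynomial (Fin 3) R :=
  aeval ![X 0, X 1]

/-- Projection `x ↦ x, y ↦ y, z ↦ 0`. -/
noncomputable def piP : MvPolynomial (Fin 3) R →ₐ[R] MvPolynomial (Fin 2) R :=
  aeval ![X 0, X 1, 0]

/-- Projection `x ↦ x, y ↦ y, z ↦ xy`. -/
noncomputable def piP1 : MvPolynomial (Fin 3) R →ₐ[R] MvPolynomial (Fin 2) R :=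
  aeval ![X 0, X 1, X 0 * X 1]

@[simp] lemma embP_X0 : embP (R := R) (X 0) = X 0 := by simp [embP]
@[simp] lemma embP_X1 : embP (R := R) (X 1) = X 1 := by simp [embP]
@[simp] lemma piP_X0 : piP (R := R) (X 0) = X 0 := by simp [piP]
@[simp] lemma piP_X1 : piP (R := R) (X 1) = X 1 := by simp [piP]
@[simp] lemma piP_X2 : piP (R := R) (X 2) = 0 := by simp [piP]
@[simp] lemma piP1_X0 : piP1 (R := R) (X 0) = X 0 := by simp [piP1]
@[simp] lemma piP1_X1 : piP1 (R := R) (X 1) = X 1 := by simp [piP1]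
@[simp] lemma piP1_X2 : piP1 (R := R) (X 2) = X 0 * X 1 := by simp [piP1]
@[simp] lemma piP1_C (r : R) : piP1 (C r) = C r := by
  simp [piP1, algebraMap_eq]
@[simp] lemma piP_C (r : R) : piP (C r) = C r := by
  simp [piP, algebraMap_eq]
@[simp] lemma embP_C (r : R) : embP (C r) = C r := by
  simp [embP, algebraMap_eq]

lemma piP_embP (s : MvPolynomial (Fin 2) R) : piP (embP s) = s := by
  have : (piP.comp embP : MvPolynomial (Fin 2) R →ₐ[R] _) = AlgHom.id R _ := by
    apply MvPolynomial.algHom_ext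
    intro i
    fin_cases i <;> simp
  exact congrArg (fun f => f s) (congrArg DFunLike.coe this)

lemma piP1_embP (s : MvPolynomial (Fin 2) R) : piP1 (embP s) = s := by
  have : (piP1.comp embP : MvPolynomial (Fin 2) R →ₐ[R] _) = AlgHom.id R _ := by
    apply MvPolynomial.algHom_ext
    intro i
    fin_cases i <;> simp
  exact congrArg (fun f => f s) (congrArg DFunLike.coe this)

/-- Polynomials with zero constant term lie in the ideal generated by the variables. -/
lemma mem_span_X {n : ℕ} (p : MvPolynomial (Fin n) R) (h : constantCoeff p = 0) :
    p ∈ Ideal.span (Set.range (X : Fin n → MvPolynomial (Fin n) R)) := by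
  rw [as_sum p]
  apply Ideal.sum_mem
  intro d hd
  by_cases hd0 : d = 0
  · subst hd0
    have : coeff 0 p = 0 := by rwa [constantCoeff_eq] at h
    simp [this]
  · obtain ⟨i, hi⟩ : ∃ i, d i ≠ 0 := by
      by_contra hc
      push_neg at hc
      exact hd0 (Finsupp.ext fun a => hc a)
    have hidx : Finsupp.single i 1 + (d - Finsupp.single i 1) = d := by
      ext a
      simp only [Finsupp.add_apply, Finsupp.tsub_apply, Finsupp.single_apply]
      split_ifs with hif
      · subst hif
        omega
      · omega
    have key : monomial d (coeff d p) =
        X i * monomial (d - Finsupp.single i 1) (coeff d p) := by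
      rw [X, monomial_mul, one_mul, hidx]
    rw [key]
    exact Ideal.mul_mem_right _ _ (Ideal.subset_span ⟨i, rfl⟩)

lemma memA_X0X2 : (X 0 * X 2 : MvPolynomial (Fin 3) R) ∈ idealA R := by
  rw [idealA]; exact Ideal.subset_span (by simp)

lemma memA_X1X2 : (X 1 * X 2 : MvPolynomial (Fin 3) R) ∈ idealA R := by
  rw [idealA]; exact Ideal.subset_span (by simp)

lemma memA_X2sq : (X 2 ^ 2 : MvPolynomial (Fin 3) R) ∈ idealA R := by
  rw [idealA]; exact Ideal.subset_span (by simp)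

lemma memA_X0sq : (X 0 ^ 2 : MvPolynomial (Fin 3) R) ∈ idealA R := by
  rw [idealA]; exact Ideal.subset_span (by simp)

lemma memA_X1sq : (X 1 ^ 2 : MvPolynomial (Fin 3) R) ∈ idealA R := by
  rw [idealA]; exact Ideal.subset_span (by simp)

lemma memB_X0sq : (X 0 ^ 2 : MvPolynomial (Fin 2) R) ∈ idealB R := by
  rw [idealB]; exact Ideal.subset_span (by simp)

lemma memB_X1sq : (X 1 ^ 2 : MvPolynomial (Fin 2) R) ∈ idealB R := by
  rw [idealB]; exact Ideal.subset_span (by simp)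

lemma X2_mul_span (x : MvPolynomial (Fin 3) R)
    (hx : x ∈ Ideal.span (Set.range (X : Fin 3 → MvPolynomial (Fin 3) R))) :
    X 2 * x ∈ idealA R := by
  induction hx using Submodule.span_induction with
  | mem x hx =>
      obtain ⟨i, rfl⟩ := hx
      fin_cases i
      · show (X 2 * X 0 : MvPolynomial (Fin 3) R) ∈ idealA R
        rw [mul_comm]; exact memA_X0X2
      · show (X 2 * X 1 : MvPolynomial (Fin 3) R) ∈ idealA R
        rw [mul_comm]; exact memA_X1X2
      · show (X 2 * X 2 : MvPolynomial (Fin 3) R) ∈ idealA R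
        rw [← sq]; exact memA_X2sq
  | zero => simp
  | add x y hx hy ihx ihy => rw [mul_add]; exact Ideal.add_mem _ ihx ihy
  | smul a x hx ihx =>
      rw [smul_eq_mul, mul_left_comm]
      exact Ideal.mul_mem_left _ _ ihx

lemma X2_mul_mem (q : MvPolynomial (Fin 3) R) (h : constantCoeff q = 0) :
    X 2 * q ∈ idealA R := X2_mul_span q (mem_span_X q h)

lemma X0X1_mul_piP1_span (x : MvPolynomial (Fin 3) R)
    (hx : x ∈ Ideal.span (Set.range (X : Fin 3 → MvPolynomial (Fin 3) R))) :
    X 0 * X 1 * piP1 x ∈ idealB R := by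
  induction hx using Submodule.span_induction with
  | mem x hx =>
      obtain ⟨i, rfl⟩ := hx
      fin_cases i
      · show (X 0 * X 1 * piP1 (X 0) : MvPolynomial (Fin 2) R) ∈ idealB R
        rw [piP1_X0, show (X 0 * X 1 * X 0 : MvPolynomial (Fin 2) R) = X 1 * X 0 ^ 2 by ring]
        exact Ideal.mul_mem_left _ _ memB_X0sq
      · show (X 0 * X 1 * piP1 (X 1) : MvPolynomial (Fin 2) R) ∈ idealB R
        rw [piP1_X1, show (X 0 * X 1 * X 1 : MvPolynomial (Fin 2) R) = X 0 * X 1 ^ 2 by ring]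
        exact Ideal.mul_mem_left _ _ memB_X1sq
      · show (X 0 * X 1 * piP1 (X 2) : MvPolynomial (Fin 2) R) ∈ idealB R
        rw [piP1_X2, show (X 0 * X 1 * (X 0 * X 1) : MvPolynomial (Fin 2) R)
          = X 1 ^ 2 * X 0 ^ 2 by ring]
        exact Ideal.mul_mem_left _ _ memB_X0sq
  | zero => simp
  | add x y hx hy ihx ihy => rw [map_add, mul_add]; exact Ideal.add_mem _ ihx ihy
  | smul a x hx ihx =>
      rw [smul_eq_mul, map_mul, mul_left_comm]
      exact Ideal.mul_mem_left _ _ ihx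

lemma X0X1_mul_piP1_mem (w : MvPolynomial (Fin 3) R) (h : constantCoeff w = 0) :
    X 0 * X 1 * piP1 w ∈ idealB R := X0X1_mul_piP1_span w (mem_span_X w h)

/-- coefficient extraction: if `r·xy ∈ (x², y²)` then `r = 0`. -/
lemma eq_zero_of_C_mul_X0X1_mem (r : R) (h : C r * (X 0 * X 1) ∈ idealB R) : r = 0 := by
  rw [idealB, Ideal.mem_span_pair] at h
  obtain ⟨u, v, huv⟩ := h
  have := congrArg (coeff (Finsupp.single 0 1 + Finsupp.single 1 1)) huv
  rw [coeff_add] at this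
  have hx0 : (X 0 : MvPolynomial (Fin 2) R) ^ 2 = monomial (Finsupp.single 0 2) 1 := by
    rw [X_pow_eq_monomial]
  have hx1 : (X 1 : MvPolynomial (Fin 2) R) ^ 2 = monomial (Finsupp.single 1 2) 1 := by
    rw [X_pow_eq_monomial]
  rw [hx0, hx1, coeff_mul_monomial', coeff_mul_monomial'] at this
  rw [if_neg, if_neg] at this
  · have hrhs : C r * (X 0 * X 1 : MvPolynomial (Fin 2) R) =
        monomial (Finsupp.single 0 1 + Finsupp.single 1 1) r := by
      rw [X, X, monomial_mul, C_mul_monomial, one_mul, mul_one]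
    rw [hrhs, coeff_monomial, if_pos rfl] at this
    simpa using this.symm
  · intro hle
    have := hle 1
    simp [Finsupp.single_apply] at this
  · intro hle
    have := hle 0
    simp [Finsupp.single_apply] at this

/-- Every 3-variable polynomial splits as `emb (π p) + z·q`. -/
lemma split (p : MvPolynomial (Fin 3) R) :
    ∃ q : MvPolynomial (Fin 3) R, p = embP (piP p) + X 2 * q := by
  induction p using MvPolynomial.induction_on with
  | C a => exact ⟨0, by simp [piP, embP]⟩
  | add p p' ihp ihp' =>
      obtain ⟨q, hq⟩ := ihp
      obtain ⟨q', hq'⟩ := ihp'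
      refine ⟨q + q', ?_⟩
      rw [map_add, map_add]
      conv_lhs => rw [hq, hq']
      ring
  | mul_X p i ihp =>
      obtain ⟨q, hq⟩ := ihp
      fin_cases i
      · refine ⟨q * X 0, ?_⟩
        show p * X 0 = embP (piP (p * X 0)) + X 2 * (q * X 0)
        rw [map_mul, piP_X0, map_mul, embP_X0]
        conv_lhs => rw [hq]
        ring
      · refine ⟨q * X 1, ?_⟩
        show p * X 1 = embP (piP (p * X 1)) + X 2 * (q * X 1)
        rw [map_mul, piP_X1, map_mul, embP_X1]
        conv_lhs => rw [hq]
        ring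
      · refine ⟨p, ?_⟩
        show p * X 2 = embP (piP (p * X 2)) + X 2 * p
        rw [map_mul, piP_X2, mul_zero, map_zero]
        ring

lemma embP_mem (s : MvPolynomial (Fin 2) R) (h : s ∈ idealB R) : embP s ∈ idealA R := by
  rw [idealB, Ideal.mem_span_pair] at h
  obtain ⟨u, v, huv⟩ := h
  rw [← huv, map_add, map_mul, map_mul, map_pow, map_pow, embP_X0, embP_X1]
  exact Ideal.add_mem _ (Ideal.mul_mem_left _ _ memA_X0sq) (Ideal.mul_mem_left _ _ memA_X1sq)

end Aux

/-- Let `B = R[x,y]/(x², y²)` and `A = R[x,y,z]/(x², y², z², xz, yz)`, and let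
`φ₁, φ₂ : A → B` be the `R`-algebra homomorphisms determined by
`φ₁ : x ↦ x, y ↦ y, z ↦ xy` and `φ₂ : x ↦ x, y ↦ y, z ↦ 0`.  Then for any `b₁, b₂ ∈ B`
with `b₁ - b₂` in the ideal generated by `xy`, there is a unique `a ∈ A` with
`φ₁ a = b₁` and `φ₂ a = b₂`. -/
theorem quasiColimit_strongDifference {R : Type*} [CommRing R]
    (φ₁ φ₂ : (MvPolynomial (Fin 3) R ⧸ idealA R) →ₐ[R] (MvPolynomial (Fin 2) R ⧸ idealB R))
    (h₁x : φ₁ (Ideal.Quotient.mk (idealA R) (X 0)) = Ideal.Quotient.mk (idealB R) (X 0))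
    (h₁y : φ₁ (Ideal.Quotient.mk (idealA R) (X 1)) = Ideal.Quotient.mk (idealB R) (X 1))
    (h₁z : φ₁ (Ideal.Quotient.mk (idealA R) (X 2)) = Ideal.Quotient.mk (idealB R) (X 0 * X 1))
    (h₂x : φ₂ (Ideal.Quotient.mk (idealA R) (X 0)) = Ideal.Quotient.mk (idealB R) (X 0))
    (h₂y : φ₂ (Ideal.Quotient.mk (idealA R) (X 1)) = Ideal.Quotient.mk (idealB R) (X 1))
    (h₂z : φ₂ (Ideal.Quotient.mk (idealA R) (X 2)) = 0)
    (b₁ b₂ : MvPolynomial (Fin 2) R ⧸ idealB R)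
    (h : b₁ - b₂ ∈ Ideal.span {Ideal.Quotient.mk (idealB R) (X 0 * X 1)}) :
    ∃! a : MvPolynomial (Fin 3) R ⧸ idealA R, φ₁ a = b₁ ∧ φ₂ a = b₂ := by
  set mk3 := Ideal.Quotient.mk (idealA R)
  set mk2 := Ideal.Quotient.mk (idealB R)
  -- identify φ₁ with π₁ and φ₂ with π on representatives
  have hφ₁ : ∀ p : MvPolynomial (Fin 3) R, φ₁ (mk3 p) = mk2 (piP1 p) := by
    have : φ₁.comp (Ideal.Quotient.mkₐ R (idealA R)) =
        (Ideal.Quotient.mkₐ R (idealB R)).comp piP1 := by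
      apply MvPolynomial.algHom_ext
      intro i
      fin_cases i <;>
        simp [Ideal.Quotient.mkₐ_eq_mk, mk3, mk2, h₁x, h₁y, h₁z]
    intro p
    exact congrArg (fun f => f p) (congrArg DFunLike.coe this)
  have hφ₂ : ∀ p : MvPolynomial (Fin 3) R, φ₂ (mk3 p) = mk2 (piP p) := by
    have : φ₂.comp (Ideal.Quotient.mkₐ R (idealA R)) =
        (Ideal.Quotient.mkₐ R (idealB R)).comp piP := by
      apply MvPolynomial.algHom_ext
      intro i
      fin_cases i <;>
        simp [Ideal.Quotient.mkₐ_eq_mk, mk3, mk2, h₂x, h₂y, h₂z]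
    intro p
    exact congrArg (fun f => f p) (congrArg DFunLike.coe this)
  -- injectivity of the pair (φ₁, φ₂)
  have inj : ∀ u v : MvPolynomial (Fin 3) R ⧸ idealA R,
      φ₁ u = φ₁ v → φ₂ u = φ₂ v → u = v := by
    intro u v h1 h2
    obtain ⟨p, hp⟩ := Ideal.Quotient.mk_surjective (I := idealA R) (u - v)
    have e1 : mk2 (piP1 p) = 0 := by
      rw [← hφ₁ p, hp, map_sub, h1, sub_self]
    have e2 : mk2 (piP p) = 0 := by
      rw [← hφ₂ p, hp, map_sub, h2, sub_self]
    rw [Ideal.Quotient.eq_zero_iff_mem] at e1 e2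
    obtain ⟨q, hq⟩ := split p
    have hw0 : constantCoeff (q - C (constantCoeff q)) = 0 := by
      rw [map_sub, constantCoeff_C, sub_self]
    have hcX : C (constantCoeff q) * (X 0 * X 1) ∈ idealB R := by
      have hexp : C (constantCoeff q) * (X 0 * X 1) =
          piP1 p - piP p - X 0 * X 1 * piP1 (q - C (constantCoeff q)) := by
        conv_rhs => rw [hq]
        rw [map_add, map_add, piP1_embP, piP_embP, map_mul, map_mul, piP1_X2, piP_X2,
          map_sub, piP1_C]
        ring
      rw [hexp]
      exact Ideal.sub_mem _ (Ideal.sub_mem _ e1 e2) (X0X1_mul_piP1_mem _ hw0)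
    have hc0 : constantCoeff q = 0 := eq_zero_of_C_mul_X0X1_mem _ hcX
    have hpmem : p ∈ idealA R := by
      rw [hq]
      exact Ideal.add_mem _ (embP_mem _ e2) (X2_mul_mem q hc0)
    have : mk3 p = 0 := Ideal.Quotient.eq_zero_iff_mem.mpr hpmem
    rw [hp] at this
    exact sub_eq_zero.mp this
  -- existence
  obtain ⟨cq, hcq⟩ := Ideal.mem_span_singleton'.mp h
  obtain ⟨Cp, hCp⟩ := Ideal.Quotient.mk_surjective (I := idealB R) cq
  obtain ⟨Q, hQ⟩ := Ideal.Quotient.mk_surjective (I := idealB R) b₂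
  refine ⟨mk3 (embP Q + embP Cp * X 2), ⟨?_, ?_⟩, ?_⟩
  · rw [hφ₁, map_add, map_mul, piP1_embP, piP1_embP, piP1_X2, map_add, map_mul, hQ,
      hCp, hcq]
    ring
  · rw [hφ₂, map_add, map_mul, piP_embP, piP_X2, mul_zero, add_zero, hQ]
  · intro a' ⟨ha1, ha2⟩
    apply inj
    · rw [ha1, hφ₁, map_add, map_mul, piP1_embP, piP1_embP, piP1_X2, map_add, map_mul,
        hQ, hCp, hcq]
      ring
    · rw [ha2, hφ₂, map_add, map_mul, piP_embP, piP_X2, mul_zero, add_zero, hQ]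
end

section
/- Let R be a commutative ring and n a natural number. Let B = R[x₁,…,x_n,u,v]/(x₁²,…,x_n², u², v²) and A = R[x₁,…,x_n,u,v,w]/(x₁²,…,x_n², u², v², w², uw, vw). Let φ₁, φ₂ : A → B be the R-algebra homomorphisms fixing each xᵢ, u, v and sending w to uv and to 0 respectively (both well defined). Then for any b₁, b₂ ∈ B whose difference lies in the ideal of B generated by uv, there exists a unique a ∈ A with φ₁(a) = b₁ and φ₂(a) = b₂. -/
open MvPolynomial

/-- The ideal `(x₁², …, x_n², u², v²)` of `R[x₁,…,x_n,u,v]` (with `u, v` the last two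
variables), so that the quotient is the function algebra of `D^{n+2}`. -/
noncomputable def idealBrel (R : Type*) [CommRing R] (n : ℕ) :
    Ideal (MvPolynomial (Fin (n + 2)) R) :=
  Ideal.span (Set.range fun i : Fin (n + 2) => X i ^ 2)

/-- The ideal `(x₁², …, x_n², u², v², w², uw, vw)` of `R[x₁,…,x_n,u,v,w]` (with `u, v, w`
the last three variables), so that the quotient is the function algebra of
`D^{n+3}{(n+1,n+3),(n+2,n+3)}`. -/
noncomputable def idealArel (R : Type*) [CommRing R] (n : ℕ) :
    Ideal (MvPolynomial (Fin (n + 3)) R) :=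
  Ideal.span (Set.range (fun i : Fin (n + 3) => X i ^ 2) ∪
    {X (⟨n, by omega⟩ : Fin (n + 3)) * X (⟨n + 2, by omega⟩ : Fin (n + 3)),
     X (⟨n + 1, by omega⟩ : Fin (n + 3)) * X (⟨n + 2, by omega⟩ : Fin (n + 3))})

section Aux

variable {R : Type*} [CommRing R] {n : ℕ}

lemma xsq_mem_A (i : Fin (n + 3)) :
    (X i ^ 2 : MvPolynomial (Fin (n + 3)) R) ∈ idealArel R n :=
  Ideal.subset_span (Or.inl ⟨i, rfl⟩)

lemma rename_mem_idealArel {q : MvPolynomial (Fin (n + 2)) R} (hq : q ∈ idealBrel R n) :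
    rename Fin.castSucc q ∈ idealArel R n := by
  induction hq using Submodule.span_induction with
  | mem x hx => obtain ⟨i, rfl⟩ := hx; rw [map_pow, rename_X]; exact xsq_mem_A _
  | zero => simp
  | add x y _ _ hx hy => rw [map_add]; exact add_mem hx hy
  | smul r x _ hx => rw [smul_eq_mul, map_mul]; exact Ideal.mul_mem_left _ _ hx

lemma mul_w_mem_idealArel {q : MvPolynomial (Fin (n + 2)) R}
    (hq : q ∈ Ideal.span ((Set.range fun i : Fin (n + 2) => (X i : MvPolynomial (Fin (n + 2)) R) ^ 2) ∪
      {X (⟨n, Nat.lt_add_of_pos_right two_pos⟩ : Fin (n + 2)), X (⟨n + 1, Nat.lt_succ_self (n + 1)⟩ : Fin (n + 2))})) :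
    rename Fin.castSucc q * X (Fin.last (n + 2)) ∈ idealArel R n := by
  induction hq using Submodule.span_induction with
  | mem x hx =>
    simp only [Set.mem_union, Set.mem_range, Set.mem_insert_iff, Set.mem_singleton_iff] at hx
    rcases hx with ⟨i, rfl⟩ | rfl | rfl
    · rw [map_pow, rename_X]
      exact Ideal.mul_mem_right _ _ (xsq_mem_A _)
    · rw [rename_X]
      have : (Fin.castSucc (⟨n, Nat.lt_add_of_pos_right two_pos⟩ : Fin (n + 2))) = (⟨n, by omega⟩ : Fin (n + 3)) := rfl
      rw [this, show Fin.last (n + 2) = (⟨n + 2, by omega⟩ : Fin (n + 3)) from rfl]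
      exact Ideal.subset_span (Or.inr (Or.inl rfl))
    · rw [rename_X]
      have : (Fin.castSucc (⟨n + 1, Nat.lt_succ_self (n + 1)⟩ : Fin (n + 2))) = (⟨n + 1, by omega⟩ : Fin (n + 3)) := rfl
      rw [this, show Fin.last (n + 2) = (⟨n + 2, by omega⟩ : Fin (n + 3)) from rfl]
      exact Ideal.subset_span (Or.inr (Or.inr rfl))
  | zero => simp
  | add x y _ _ hx hy => rw [map_add, add_mul]; exact add_mem hx hy
  | smul r x _ hx => rw [smul_eq_mul, map_mul, mul_assoc]; exact Ideal.mul_mem_left _ _ hx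

end Aux

section Key

variable {R : Type*} [CommRing R] {n : ℕ}

lemma key_mem {q : MvPolynomial (Fin (n + 2)) R}
    (hq : q * (X (⟨n, Nat.lt_add_of_pos_right two_pos⟩ : Fin (n + 2)) * X (⟨n + 1, Nat.lt_succ_self (n + 1)⟩ : Fin (n + 2))) ∈ idealBrel R n) :
    q ∈ Ideal.span ((Set.range fun i : Fin (n + 2) => (X i : MvPolynomial (Fin (n + 2)) R) ^ 2) ∪
      {X (⟨n, Nat.lt_add_of_pos_right two_pos⟩ : Fin (n + 2)), X (⟨n + 1, Nat.lt_succ_self (n + 1)⟩ : Fin (n + 2))}) := by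
  set u : Fin (n + 2) := ⟨n, Nat.lt_add_of_pos_right two_pos⟩ with hu
  set v : Fin (n + 2) := ⟨n + 1, Nat.lt_succ_self (n + 1)⟩ with hv
  have huv : u ≠ v := by simp [hu, hv, Fin.ext_iff]
  have hBset : (Set.range fun i : Fin (n + 2) => (X i : MvPolynomial (Fin (n + 2)) R) ^ 2)
      = (fun s => monomial s (1 : R)) '' Set.range (fun i : Fin (n + 2) => Finsupp.single i 2) := by
    rw [show (fun i : Fin (n + 2) => (X i : MvPolynomial (Fin (n + 2)) R) ^ 2)
        = fun i => monomial (Finsupp.single i 2) (1 : R) from funext fun i => X_pow_eq_monomial,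
      ← Set.range_comp]
    rfl
  have hXmon : ∀ i : Fin (n + 2), (X i : MvPolynomial (Fin (n + 2)) R)
      = monomial (Finsupp.single i 1) 1 := fun i => by rw [← X_pow_eq_monomial, pow_one]
  have hUset : ((Set.range fun i : Fin (n + 2) => (X i : MvPolynomial (Fin (n + 2)) R) ^ 2)
        ∪ {X u, X v})
      = (fun s => monomial s (1 : R)) ''
        (Set.range (fun i : Fin (n + 2) => Finsupp.single i 2)
          ∪ {Finsupp.single u 1, Finsupp.single v 1}) := by
    rw [Set.image_union, ← hBset, Set.image_insert_eq, Set.image_singleton, hXmon u, hXmon v]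
  have hq' : ∀ m ∈ (q * (X u * X v)).support,
      ∃ s ∈ Set.range (fun i : Fin (n + 2) => Finsupp.single i 2), s ≤ m := by
    rw [← mem_ideal_span_monomial_image, ← hBset]
    exact hq
  rw [hUset, mem_ideal_span_monomial_image]
  intro m hm
  by_cases hun : 1 ≤ m u
  · exact ⟨Finsupp.single u 1, Or.inr (Or.inl rfl), Finsupp.single_le_iff.mpr hun⟩
  by_cases hvn : 1 ≤ m v
  · exact ⟨Finsupp.single v 1, Or.inr (Or.inr rfl), Finsupp.single_le_iff.mpr hvn⟩
  have hu0 : m u = 0 := by omega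
  have hv0 : m v = 0 := by omega
  have hmul : (X u * X v : MvPolynomial (Fin (n + 2)) R)
      = monomial (Finsupp.single u 1 + Finsupp.single v 1) 1 := by
    rw [hXmon u, hXmon v, monomial_mul, one_mul]
  have hc : coeff (m + (Finsupp.single u 1 + Finsupp.single v 1)) (q * (X u * X v))
      = coeff m q := by
    rw [hmul, coeff_mul_monomial, mul_one]
  obtain ⟨s, ⟨i, rfl⟩, hle⟩ := hq' _ (by rw [mem_support_iff, hc]; exact mem_support_iff.mp hm)
  have h2 : 2 ≤ m i + ((Finsupp.single u 1 + Finsupp.single v 1 : Fin (n + 2) →₀ ℕ) i) := by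
    have := Finsupp.single_le_iff.mp hle
    simpa [Finsupp.add_apply] using this
  refine ⟨Finsupp.single i 2, Or.inl ⟨i, rfl⟩, Finsupp.single_le_iff.mpr ?_⟩
  rcases eq_or_ne i u with rfl | hiu
  · simp [Finsupp.single_apply, huv.symm, hu0] at h2
  rcases eq_or_ne i v with rfl | hiv
  · simp [Finsupp.single_apply, huv, hv0] at h2
  · simpa [Finsupp.single_apply, Ne.symm hiu, Ne.symm hiv] using h2

end Key

section Sect

variable {R : Type*} [CommRing R] {n : ℕ}

/-- The section `B →ₐ[R] A` induced by `rename Fin.castSucc`. -/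
noncomputable def sect (R : Type*) [CommRing R] (n : ℕ) :
    (MvPolynomial (Fin (n + 2)) R ⧸ idealBrel R n) →ₐ[R]
      (MvPolynomial (Fin (n + 3)) R ⧸ idealArel R n) :=
  Ideal.Quotient.liftₐ (idealBrel R n)
    ((Ideal.Quotient.mkₐ R (idealArel R n)).comp (rename (R := R) Fin.castSucc))
    (fun p hp => by
      simp only [AlgHom.comp_apply, Ideal.Quotient.mkₐ_eq_mk, Ideal.Quotient.eq_zero_iff_mem]
      exact rename_mem_idealArel hp)

lemma sect_mk (q : MvPolynomial (Fin (n + 2)) R) :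
    sect R n (Ideal.Quotient.mk (idealBrel R n) q)
      = Ideal.Quotient.mk (idealArel R n) (rename Fin.castSucc q) := rfl

/-- Every element of `A` can be written `q₀ + q₁ * w`. -/
lemma repr_w (p : MvPolynomial (Fin (n + 3)) R) :
    ∃ q₀ q₁ : MvPolynomial (Fin (n + 2)) R,
      Ideal.Quotient.mk (idealArel R n) p
        = Ideal.Quotient.mk (idealArel R n) (rename Fin.castSucc q₀)
        + Ideal.Quotient.mk (idealArel R n) (rename Fin.castSucc q₁)
          * Ideal.Quotient.mk (idealArel R n) (X (Fin.last (n + 2))) := by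
  have hw2 : Ideal.Quotient.mk (idealArel R n) (X (Fin.last (n + 2)))
      * Ideal.Quotient.mk (idealArel R n) (X (Fin.last (n + 2))) = 0 := by
    rw [← map_mul, ← sq, Ideal.Quotient.eq_zero_iff_mem]
    exact xsq_mem_A _
  induction p using MvPolynomial.induction_on with
  | C r => exact ⟨C r, 0, by simp⟩
  | add p q hp hq =>
    obtain ⟨a0, a1, ha⟩ := hp
    obtain ⟨b0, b1, hb⟩ := hq
    exact ⟨a0 + b0, a1 + b1, by rw [map_add, ha, hb]; simp only [map_add]; ring⟩
  | mul_X p i hp =>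
    obtain ⟨a0, a1, ha⟩ := hp
    induction i using Fin.lastCases with
    | last =>
      refine ⟨0, a0, ?_⟩
      rw [map_mul, ha, add_mul, mul_assoc, hw2, mul_zero, add_zero]
      simp
    | cast j =>
      exact ⟨a0 * X j, a1 * X j, by simp only [map_mul, rename_X, ha]; ring⟩

end Sect

set_option maxHeartbeats 1000000 in
/-- Let `B = R[x₁,…,x_n,u,v]/(x₁²,…,x_n²,u²,v²)` and
`A = R[x₁,…,x_n,u,v,w]/(x₁²,…,x_n²,u²,v²,w²,uw,vw)`, and let `φ₁, φ₂ : A → B` be the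
`R`-algebra homomorphisms fixing each `xᵢ, u, v` and sending `w` to `uv` and to `0`
respectively. Then for any `b₁, b₂ ∈ B` whose difference lies in the ideal generated by
`uv`, there exists a unique `a ∈ A` with `φ₁ a = b₁` and `φ₂ a = b₂`. -/
theorem quasiColimit_relativized_strongDifference {R : Type*} [CommRing R] (n : ℕ)
    (φ₁ φ₂ : (MvPolynomial (Fin (n + 3)) R ⧸ idealArel R n) →ₐ[R]
      (MvPolynomial (Fin (n + 2)) R ⧸ idealBrel R n))
    (h₁ : ∀ i : Fin (n + 2), φ₁ (Ideal.Quotient.mk (idealArel R n) (X i.castSucc)) =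
      Ideal.Quotient.mk (idealBrel R n) (X i))
    (h₂ : ∀ i : Fin (n + 2), φ₂ (Ideal.Quotient.mk (idealArel R n) (X i.castSucc)) =
      Ideal.Quotient.mk (idealBrel R n) (X i))
    (h₁w : φ₁ (Ideal.Quotient.mk (idealArel R n) (X (Fin.last (n + 2)))) =
      Ideal.Quotient.mk (idealBrel R n)
        (X (⟨n, by omega⟩ : Fin (n + 2)) * X (⟨n + 1, by omega⟩ : Fin (n + 2))))
    (h₂w : φ₂ (Ideal.Quotient.mk (idealArel R n) (X (Fin.last (n + 2)))) = 0)
    (b₁ b₂ : MvPolynomial (Fin (n + 2)) R ⧸ idealBrel R n)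
    (h : b₁ - b₂ ∈ Ideal.span {Ideal.Quotient.mk (idealBrel R n)
      (X (⟨n, by omega⟩ : Fin (n + 2)) * X (⟨n + 1, by omega⟩ : Fin (n + 2)))}) :
    ∃! a : MvPolynomial (Fin (n + 3)) R ⧸ idealArel R n, φ₁ a = b₁ ∧ φ₂ a = b₂ := by
  have hcomp : ∀ φ : (MvPolynomial (Fin (n + 3)) R ⧸ idealArel R n) →ₐ[R]
      (MvPolynomial (Fin (n + 2)) R ⧸ idealBrel R n),
      (∀ i : Fin (n + 2), φ (Ideal.Quotient.mk (idealArel R n) (X i.castSucc)) =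
        Ideal.Quotient.mk (idealBrel R n) (X i)) → ∀ b, φ (sect R n b) = b := by
    intro φ hφ b
    have hid : φ.comp (sect R n) = AlgHom.id R _ := by
      apply Ideal.Quotient.algHom_ext
      apply MvPolynomial.algHom_ext
      intro i
      simp only [AlgHom.comp_apply, Ideal.Quotient.mkₐ_eq_mk, AlgHom.id_apply]
      rw [sect_mk, rename_X]
      exact hφ i
    calc φ (sect R n b) = (φ.comp (sect R n)) b := rfl
    _ = b := by rw [hid]; rfl
  have hφ₁s : ∀ b, φ₁ (sect R n b) = b := hcomp φ₁ h₁
  have hφ₂s : ∀ b, φ₂ (sect R n b) = b := hcomp φ₂ h₂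
  obtain ⟨c, hc⟩ := Ideal.mem_span_singleton'.mp h
  refine ⟨sect R n b₂ + sect R n c * Ideal.Quotient.mk (idealArel R n) (X (Fin.last (n + 2))),
    ⟨?_, ?_⟩, ?_⟩
  · rw [map_add, map_mul, hφ₁s, hφ₁s, h₁w, hc]; ring
  · rw [map_add, map_mul, hφ₂s, hφ₂s, h₂w, mul_zero, add_zero]
  · -- uniqueness
    intro a ⟨ha₁, ha₂⟩
    have hinj : ∀ d : MvPolynomial (Fin (n + 3)) R ⧸ idealArel R n,
        φ₁ d = 0 → φ₂ d = 0 → d = 0 := by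
      intro d hd₁ hd₂
      obtain ⟨p, rfl⟩ := Ideal.Quotient.mk_surjective (I := idealArel R n) d
      obtain ⟨q₀, q₁, hpq⟩ := repr_w (R := R) (n := n) p
      rw [hpq] at hd₁ hd₂ ⊢
      rw [map_add, map_mul, ← sect_mk, ← sect_mk, hφ₂s, hφ₂s, h₂w, mul_zero, add_zero] at hd₂
      have hq₀ : q₀ ∈ idealBrel R n := by
        rwa [Ideal.Quotient.eq_zero_iff_mem] at hd₂
      rw [map_add, map_mul, ← sect_mk, ← sect_mk, hφ₁s, hφ₁s, h₁w, hd₂, zero_add] at hd₁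
      have hq₁ : q₁ * (X (⟨n, by omega⟩ : Fin (n + 2))
          * X (⟨n + 1, by omega⟩ : Fin (n + 2))) ∈ idealBrel R n := by
        rw [← Ideal.Quotient.eq_zero_iff_mem, map_mul]
        exact hd₁
      have m₀ : Ideal.Quotient.mk (idealArel R n) (rename Fin.castSucc q₀) = 0 := by
        rw [Ideal.Quotient.eq_zero_iff_mem]
        exact rename_mem_idealArel hq₀
      have m₁ : Ideal.Quotient.mk (idealArel R n) (rename Fin.castSucc q₁)
          * Ideal.Quotient.mk (idealArel R n) (X (Fin.last (n + 2))) = 0 := by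
        rw [← map_mul, Ideal.Quotient.eq_zero_iff_mem]
        exact mul_w_mem_idealArel (key_mem hq₁)
      rw [m₀, m₁, add_zero]
    have := hinj
      (a - (sect R n b₂ + sect R n c * Ideal.Quotient.mk (idealArel R n) (X (Fin.last (n + 2)))))
      (by rw [map_sub, ha₁, map_add, map_mul, hφ₁s, hφ₁s, h₁w, hc]; ring)
      (by rw [map_sub, ha₂, map_add, map_mul, hφ₂s, hφ₂s, h₂w, mul_zero, add_zero, sub_self])
    exact sub_eq_zero.mp this
end

section
/- Let R be a commutative ring and B = R[x,y]/(x², y²). Then the ideal of B generated by xy equals the intersection of the ideal generated by x with the ideal generated by y. Equivalently, for b₁, b₂ ∈ B, the difference b₁ − b₂ lies in the ideal (xy) if and only if it lies in the ideal (x) and in the ideal (y). -/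
open MvPolynomial

section Aux

variable {R : Type*} [CommRing R]

/-- Coefficients vanish on a downward-closed set of exponents if they vanish on generators. -/
lemma coeff_vanish_of_mem_span (Q : (Fin 2 →₀ ℕ) → Prop)
    (hQ : ∀ u v : Fin 2 →₀ ℕ, Q (u + v) → Q v)
    (G : Set (MvPolynomial (Fin 2) R)) (hG : ∀ g ∈ G, ∀ d, Q d → coeff d g = 0)
    {p : MvPolynomial (Fin 2) R} (hp : p ∈ Ideal.span G) :
    ∀ d, Q d → coeff d p = 0 := by
  refine Submodule.span_induction (fun g hg => hG g hg) (by simp) ?_ ?_ hp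
  · intro x y _ _ ihx ihy d hd
    simp [coeff_add, ihx d hd, ihy d hd]
  · intro a x _ ih d hd
    rw [smul_eq_mul, coeff_mul]
    refine Finset.sum_eq_zero fun uv huv => ?_
    have : Q uv.2 := hQ uv.1 uv.2 (by rwa [Finset.HasAntidiagonal.mem_antidiagonal.mp huv])
    rw [ih uv.2 this, mul_zero]

lemma mem_span_of_coeff_vanish (p : MvPolynomial (Fin 2) R)
    (h1 : ∀ d : Fin 2 →₀ ℕ, d 0 = 0 → d 1 ≤ 1 → coeff d p = 0)
    (h2 : ∀ d : Fin 2 →₀ ℕ, d 1 = 0 → d 0 ≤ 1 → coeff d p = 0) :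
    p ∈ Ideal.span {X 0 * X 1, X 0 ^ 2, X 1 ^ 2} := by
  have hxy : (X 0 * X 1 : MvPolynomial (Fin 2) R) ∈
      Ideal.span {X 0 * X 1, X 0 ^ 2, X 1 ^ 2} := Ideal.subset_span (by simp)
  have hx2 : (X 0 ^ 2 : MvPolynomial (Fin 2) R) ∈
      Ideal.span {X 0 * X 1, X 0 ^ 2, X 1 ^ 2} := Ideal.subset_span (by simp)
  have hy2 : (X 1 ^ 2 : MvPolynomial (Fin 2) R) ∈
      Ideal.span {X 0 * X 1, X 0 ^ 2, X 1 ^ 2} := Ideal.subset_span (by simp)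
  rw [p.as_sum]
  apply Ideal.sum_mem
  intro d hd
  have hc : coeff d p ≠ 0 := mem_support_iff.mp hd
  have key : (monomial d) (coeff d p) = C (coeff d p) * (X 0 ^ d 0 * X 1 ^ d 1) := by
    rw [monomial_eq, Finsupp.prod_fintype _ _ (fun i => pow_zero _), Fin.prod_univ_two]
  rw [key]
  refine Ideal.mul_mem_left _ _ ?_
  rcases le_or_gt 2 (d 0) with h | hlt0
  · obtain ⟨k, hk⟩ : ∃ k, d 0 = k + 2 := ⟨d 0 - 2, by omega⟩
    rw [hk, pow_add, mul_right_comm]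
    exact Ideal.mul_mem_left _ _ hx2
  rcases le_or_gt 2 (d 1) with h | hlt1
  · obtain ⟨k, hk⟩ : ∃ k, d 1 = k + 2 := ⟨d 1 - 2, by omega⟩
    rw [hk, pow_add, ← mul_assoc]
    exact Ideal.mul_mem_left _ _ hy2
  rcases Nat.lt_or_ge 0 (d 0) with h0 | h0
  · rcases Nat.lt_or_ge 0 (d 1) with h1 | h1
    · obtain ⟨a, ha⟩ : ∃ a, d 0 = a + 1 := ⟨d 0 - 1, by omega⟩
      obtain ⟨b, hb⟩ : ∃ b, d 1 = b + 1 := ⟨d 1 - 1, by omega⟩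
      rw [ha, hb, pow_add, pow_add, pow_one, pow_one, mul_mul_mul_comm]
      exact Ideal.mul_mem_left _ _ hxy
    · exact absurd (h2 d (by omega) (by omega)) hc
  · exact absurd (h1 d (by omega) (by omega)) hc

lemma coeff_X_pow_zero' (i : Fin 2) (e : ℕ) (d : Fin 2 →₀ ℕ) (h : d i ≠ e) :
    coeff d ((X i : MvPolynomial (Fin 2) R) ^ e) = 0 := by
  rw [X_pow_eq_monomial, coeff_monomial, if_neg]
  intro he
  apply h
  have := DFunLike.congr_fun he i
  simpa using this.symm

end Aux

/-- In `B = R[x,y]/(x², y²)`, the ideal generated by `xy` equals the intersection of the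
ideal generated by `x` with the ideal generated by `y`. -/
theorem span_xy_eq_span_x_inf_span_y (R : Type*) [CommRing R] :
    (Ideal.span {Ideal.Quotient.mk (idealB R) (X 0 * X 1)} :
        Ideal (MvPolynomial (Fin 2) R ⧸ idealB R)) =
      Ideal.span {Ideal.Quotient.mk (idealB R) (X 0)} ⊓
        Ideal.span {Ideal.Quotient.mk (idealB R) (X 1)} := by
  apply Ideal.comap_injective_of_surjective (Ideal.Quotient.mk (idealB R))
    Ideal.Quotient.mk_surjective
  have hcom : ∀ t : MvPolynomial (Fin 2) R,
      Ideal.comap (Ideal.Quotient.mk (idealB R))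
        (Ideal.span {Ideal.Quotient.mk (idealB R) t}) = Ideal.span {t} ⊔ idealB R := by
    intro t
    rw [← Set.image_singleton, ← Ideal.map_span,
      Ideal.comap_map_of_surjective _ Ideal.Quotient.mk_surjective,
      ← RingHom.ker_eq_comap_bot, Ideal.mk_ker]
  rw [Ideal.comap_inf, hcom, hcom, hcom, idealB, ← Ideal.span_union, ← Ideal.span_union,
    ← Ideal.span_union, Set.singleton_union, Set.singleton_union, Set.singleton_union]
  apply le_antisymm
  · rw [Ideal.span_le]
    rintro q hq
    simp only [Set.mem_insert_iff, Set.mem_singleton_iff] at hq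
    have hx0 : (X 0 : MvPolynomial (Fin 2) R) ∈
        Ideal.span (insert (X 0) {X 0 ^ 2, X 1 ^ 2}) := Ideal.subset_span (by simp)
    have hx1 : (X 1 : MvPolynomial (Fin 2) R) ∈
        Ideal.span (insert (X 1) {X 0 ^ 2, X 1 ^ 2}) := Ideal.subset_span (by simp)
    rcases hq with rfl | rfl | rfl
    · exact ⟨by rw [mul_comm]; exact Ideal.mul_mem_left _ _ hx0,
        Ideal.mul_mem_left _ _ hx1⟩
    · exact ⟨Ideal.subset_span (by simp), Ideal.subset_span (by simp)⟩
    · exact ⟨Ideal.subset_span (by simp), Ideal.subset_span (by simp)⟩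
  · rintro q ⟨hqx, hqy⟩
    apply mem_span_of_coeff_vanish
    · intro d hd0 hd1
      refine coeff_vanish_of_mem_span (fun d => d 0 = 0 ∧ d 1 ≤ 1) ?_ _ ?_ hqx d ⟨hd0, hd1⟩
      · rintro u v ⟨h0, h1⟩
        simp only [Finsupp.add_apply] at h0 h1
        exact ⟨by omega, by omega⟩
      · rintro g hg d ⟨h0, h1⟩
        simp only [Set.mem_insert_iff, Set.mem_singleton_iff] at hg
        rcases hg with rfl | rfl | rfl
        · rw [← pow_one (X 0 : MvPolynomial (Fin 2) R)]
          exact coeff_X_pow_zero' 0 1 d (by omega)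
        · exact coeff_X_pow_zero' 0 2 d (by omega)
        · exact coeff_X_pow_zero' 1 2 d (by omega)
    · intro d hd0 hd1
      refine coeff_vanish_of_mem_span (fun d => d 1 = 0 ∧ d 0 ≤ 1) ?_ _ ?_ hqy d ⟨hd0, hd1⟩
      · rintro u v ⟨h0, h1⟩
        simp only [Finsupp.add_apply] at h0 h1
        exact ⟨by omega, by omega⟩
      · rintro g hg d ⟨h0, h1⟩
        simp only [Set.mem_insert_iff, Set.mem_singleton_iff] at hg
        rcases hg with rfl | rfl | rfl
        · rw [← pow_one (X 1 : MvPolynomial (Fin 2) R)]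
          exact coeff_X_pow_zero' 1 1 d (by omega)
        · exact coeff_X_pow_zero' 0 2 d (by omega)
        · exact coeff_X_pow_zero' 1 2 d (by omega)
end

section
/- Let R be a commutative ring, V a finite set, and W(V) the quotient of the polynomial ring over R in variables (x_v)_{v∈V} by the ideal generated by all x_v². Let A and B be disjoint subsets of V. Then, in W(V), the ideal generated by the products {x_a·x_b : a ∈ A, b ∈ B} equals the intersection of the ideal generated by {x_a : a ∈ A} with the ideal generated by {x_b : b ∈ B}. -/
open MvPolynomial

noncomputable def sqIdeal (R : Type*) [CommRing R] (V : Type*) : Ideal (MvPolynomial V R) :=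
  Ideal.span (Set.range fun v : V => X v ^ 2)

section Aux

variable {R : Type*} [CommRing R] {V : Type*}

lemma sqIdeal_eq (R : Type*) [CommRing R] (V : Type*) :
    sqIdeal R V = Ideal.span ((fun d => monomial d (1 : R)) ''
      Set.range (fun v : V => Finsupp.single v 2)) := by
  unfold sqIdeal
  congr 1
  ext p
  simp [X_pow_eq_monomial]

lemma mem_sup_sqIdeal (S : Set (V →₀ ℕ)) (f : MvPolynomial V R) :
    f ∈ Ideal.span ((fun d => monomial d (1 : R)) '' S) ⊔ sqIdeal R V ↔
      ∀ d ∈ f.support, ∃ s ∈ S ∪ Set.range (fun v : V => Finsupp.single v 2), s ≤ d := by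
  rw [sqIdeal_eq, ← Ideal.span_union, ← Set.image_union, mem_ideal_span_monomial_image]

end Aux

/-- In `W(V) = R[(x_v)_{v ∈ V}]/(x_v²)`, for disjoint subsets `A, B ⊆ V`, the ideal
generated by the products `x_a·x_b` (`a ∈ A`, `b ∈ B`) equals the intersection of the ideal
generated by `{x_a : a ∈ A}` with the ideal generated by `{x_b : b ∈ B}`. -/
theorem span_products_eq_inf {R : Type*} [CommRing R] {V : Type*} [Fintype V]
    (A B : Set V) (hAB : Disjoint A B) :
    (Ideal.span ((fun p : V × V => Ideal.Quotient.mk (sqIdeal R V) (X p.1 * X p.2)) ''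
        (A ×ˢ B)) : Ideal (MvPolynomial V R ⧸ sqIdeal R V)) =
      Ideal.span ((fun v : V => Ideal.Quotient.mk (sqIdeal R V) (X v)) '' A) ⊓
        Ideal.span ((fun v : V => Ideal.Quotient.mk (sqIdeal R V) (X v)) '' B) := by
  classical
  set mk := Ideal.Quotient.mk (sqIdeal R V)
  have himg1 : (fun p : V × V => mk (X p.1 * X p.2)) '' (A ×ˢ B)
      = mk '' ((fun d => monomial d (1 : R)) ''
          ((fun p : V × V => Finsupp.single p.1 1 + Finsupp.single p.2 1) '' (A ×ˢ B))) := by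
    rw [Set.image_image, Set.image_image]
    refine Set.image_congr fun p _ => ?_
    rw [X, X, monomial_mul, one_mul]
  have himg2 : ∀ C : Set V, (fun v : V => mk (X v)) '' C
      = mk '' ((fun d => monomial d (1 : R)) ''
          ((fun v : V => Finsupp.single v 1) '' C)) := by
    intro C
    rw [Set.image_image, Set.image_image]
    exact Set.image_congr fun v _ => by rw [X]
  rw [himg1, himg2 A, himg2 B, ← Ideal.map_span, ← Ideal.map_span, ← Ideal.map_span]
  ext x
  obtain ⟨f, rfl⟩ := Ideal.Quotient.mk_surjective x
  rw [Ideal.mem_inf]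
  show mk f ∈ _ ↔ mk f ∈ _ ∧ mk f ∈ _
  rw [Ideal.mem_quotient_iff_mem_sup, Ideal.mem_quotient_iff_mem_sup,
    Ideal.mem_quotient_iff_mem_sup, mem_sup_sqIdeal, mem_sup_sqIdeal, mem_sup_sqIdeal]
  constructor
  · intro h
    refine ⟨fun d hd => ?_, fun d hd => ?_⟩ <;>
      obtain ⟨s, hs, hle⟩ := h d hd
    · rcases hs with ⟨⟨a, b⟩, hab, rfl⟩ | hsq
      · exact ⟨Finsupp.single a 1, Or.inl ⟨a, hab.1, rfl⟩, le_trans le_self_add hle⟩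
      · exact ⟨s, Or.inr hsq, hle⟩
    · rcases hs with ⟨⟨a, b⟩, hab, rfl⟩ | hsq
      · exact ⟨Finsupp.single b 1, Or.inl ⟨b, hab.2, rfl⟩, le_trans le_add_self hle⟩
      · exact ⟨s, Or.inr hsq, hle⟩
  · rintro ⟨hA, hB⟩ d hd
    obtain ⟨sa, hsa, hlea⟩ := hA d hd
    obtain ⟨sb, hsb, hleb⟩ := hB d hd
    rcases hsa with ⟨a, ha, rfl⟩ | hsq
    swap
    · exact ⟨sa, Or.inr hsq, hlea⟩
    rcases hsb with ⟨b, hb, rfl⟩ | hsq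
    swap
    · exact ⟨sb, Or.inr hsq, hleb⟩
    have hne : a ≠ b := fun h => Set.disjoint_left.mp hAB ha (h ▸ hb)
    refine ⟨Finsupp.single a 1 + Finsupp.single b 1,
      Or.inl ⟨⟨a, b⟩, ⟨ha, hb⟩, rfl⟩, ?_⟩
    rw [Finsupp.single_le_iff] at hlea hleb
    rw [Finsupp.le_def]
    intro v
    rcases eq_or_ne v a with rfl | hva
    · simpa [Finsupp.single_apply, Ne.symm hne] using hlea
    rcases eq_or_ne v b with rfl | hvb
    · simpa [Finsupp.single_apply, hne] using hleb
    · simp [Finsupp.single_apply, Ne.symm hva, Ne.symm hvb]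
end

section
/- Let R be a commutative ring, V a finite set, and W(V) the quotient of the polynomial ring over R in variables (x_v)_{v∈V} by the ideal generated by all x_v². Let A and B be disjoint subsets of V, let I be the ideal of W(V) generated by {x_a·x_b : a ∈ A, b ∈ B}, and for a subset T ⊆ V let κ_T : W(V) → W(V∖T) be the R-algebra map sending x_v to 0 for v ∈ T and fixing the other variables. Then for any u ∈ W(V∖A) and v ∈ W(V∖B) whose images in W(V∖(A∪B)) (killing the remaining block of variables) coincide, there exists a w ∈ W(V) with κ_A(w) = u and κ_B(w) = v, and w is unique modulo the ideal I; equivalently, W(V)/I is the fiber product of W(V∖A) and W(V∖B) over W(V∖(A∪B)). -/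
open MvPolynomial

/-- The Weil algebra `W(V) = R[(x_v)_{v ∈ V}]/(x_v² : v ∈ V)`. -/
abbrev Weil (R : Type*) [CommRing R] (V : Type*) : Type _ :=
  MvPolynomial V R ⧸ sqIdeal R V

section aux
variable {R : Type*} [CommRing R] {V : Type*}

lemma coeff_span_eq_zero {G : Set (MvPolynomial V R)} {P : (V →₀ ℕ) → Prop}
    (hdown : ∀ m₁ m₂ : V →₀ ℕ, P (m₁ + m₂) → P m₂)
    (hG : ∀ g ∈ G, ∀ m, P m → MvPolynomial.coeff m g = 0)
    {p : MvPolynomial V R} (hp : p ∈ Ideal.span G) :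
    ∀ m, P m → coeff m p = 0 := by
  classical
  refine Submodule.span_induction (fun g hg m hm => hG g hg m hm) (by simp) ?_ ?_ hp
  · intro x y _ _ hx hy m hm
    rw [coeff_add, hx m hm, hy m hm, add_zero]
  · intro a x _ ih m hm
    rw [smul_eq_mul, coeff_mul]
    refine Finset.sum_eq_zero fun q hq => ?_
    rw [ih q.2 (hdown q.1 q.2 (by rwa [Finset.HasAntidiagonal.mem_antidiagonal.mp hq])), mul_zero]

lemma coeff_sqIdeal_eq_zero {p : MvPolynomial V R} (hp : p ∈ sqIdeal R V)
    {m : V →₀ ℕ} (hm : ∀ w, m w ≤ 1) : coeff m p = 0 := by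
  classical
  refine coeff_span_eq_zero (P := fun m => ∀ w, m w ≤ 1)
    (fun m₁ m₂ h w => le_trans (by simp) (h w)) ?_ hp m hm
  rintro g ⟨v, rfl⟩ m hm
  show coeff m (X v ^ 2) = 0
  rw [X_pow_eq_monomial, coeff_monomial, if_neg]
  rintro rfl
  simpa using hm v

lemma coeff_spanX_eq_zero {s : Set V} {p : MvPolynomial V R}
    (hp : p ∈ Ideal.span (X '' s : Set (MvPolynomial V R)))
    {m : V →₀ ℕ} (hm : ∀ a ∈ s, m a = 0) : coeff m p = 0 := by
  classical
  refine coeff_span_eq_zero (P := fun m => ∀ a ∈ s, m a = 0)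
    (fun m₁ m₂ h a ha => by have := h a ha; simp only [Finsupp.add_apply] at this; omega)
    ?_ hp m hm
  classical
  rintro g ⟨v, hv, rfl⟩ m hm
  rw [X, coeff_monomial, if_neg]
  rintro rfl
  simpa using hm v hv

open scoped Classical in
variable (R) in
/-- The algebra map killing the variables in `s`. -/
noncomputable def wdown (s : Set V) : MvPolynomial V R →ₐ[R] MvPolynomial {v : V // v ∉ s} R :=
  aeval fun v => if h : v ∈ s then 0 else X ⟨v, h⟩

open scoped Classical in
lemma wdown_X (s : Set V) (v : V) :
    wdown R s (X v) = if h : v ∈ s then 0 else X ⟨v, h⟩ := aeval_X _ v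

/-- If an algebra endomorphism moves generators by elements of an ideal `K`, then it moves
every polynomial by an element of `K`. -/
lemma sub_algHom_mem {K : Ideal (MvPolynomial V R)}
    (f : MvPolynomial V R →ₐ[R] MvPolynomial V R) (hf : ∀ v, X v - f (X v) ∈ K)
    (p : MvPolynomial V R) : p - f p ∈ K := by
  induction p using MvPolynomial.induction_on with
  | C a => simp only [algHom_C, MvPolynomial.algebraMap_eq, sub_self]; exact K.zero_mem
  | add p q hp hq => have := K.add_mem hp hq; rw [map_add]; convert this using 1; ring
  | mul_X p v hp =>
      rw [map_mul]
      have h1 : p * X v - f p * f (X v)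
          = (p - f p) * X v + f p * (X v - f (X v)) := by ring
      rw [h1]
      exact K.add_mem (K.mul_mem_right _ hp) (K.mul_mem_left _ (hf v))

lemma sub_rename_wdown_mem (s : Set V) (p : MvPolynomial V R) :
    p - rename Subtype.val (wdown R s p) ∈ Ideal.span (X '' s : Set (MvPolynomial V R)) := by
  refine sub_algHom_mem ((rename Subtype.val).comp (wdown R s)) (fun v => ?_) p
  simp only [AlgHom.comp_apply, wdown_X]
  by_cases h : v ∈ s
  · rw [dif_pos h]; simpa using Ideal.subset_span (Set.mem_image_of_mem X h)
  · rw [dif_neg h, rename_X, sub_self]; exact Ideal.zero_mem _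

lemma coeff_eq_zero_of_wdown_mem (s : Set V) {p : MvPolynomial V R}
    (hp : wdown R s p ∈ sqIdeal R {v : V // v ∉ s})
    {n : V →₀ ℕ} (hsf : ∀ w, n w ≤ 1) (hn : ∀ a ∈ s, n a = 0) : coeff n p = 0 := by
  classical
  set m : {v : V // v ∉ s} →₀ ℕ := n.subtypeDomain (fun v => v ∉ s) with hm
  have hmd : Finsupp.mapDomain (Subtype.val : {v : V // v ∉ s} → V) m = n := by
    ext a
    by_cases h : a ∈ s
    · rw [Finsupp.mapDomain_notin_range, hn a h]
      rintro ⟨⟨b, hb⟩, rfl⟩; exact hb h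
    · have : a = ((⟨a, h⟩ : {v : V // v ∉ s}) : V) := rfl
      rw [this, Finsupp.mapDomain_apply Subtype.val_injective]
      rfl
  have h1 : coeff n p = coeff n (rename Subtype.val (wdown R s p)) := by
    have h0 := coeff_spanX_eq_zero (sub_rename_wdown_mem s p) hn
    rw [coeff_sub, sub_eq_zero] at h0
    exact h0
  rw [h1, ← hmd, coeff_rename_mapDomain _ Subtype.val_injective]
  refine coeff_sqIdeal_eq_zero hp fun w => ?_
  exact hsf w.1
lemma mem_sup_of_coeffs {A B : Set V} (hAB : Disjoint A B) {p : MvPolynomial V R}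
    (hA : ∀ m : V →₀ ℕ, (∀ w, m w ≤ 1) → (∀ a ∈ A, m a = 0) → coeff m p = 0)
    (hB : ∀ m : V →₀ ℕ, (∀ w, m w ≤ 1) → (∀ b ∈ B, m b = 0) → coeff m p = 0) :
    p ∈ Ideal.span ((fun q : V × V => (X q.1 * X q.2 : MvPolynomial V R)) '' (A ×ˢ B))
      ⊔ sqIdeal R V := by
  classical
  rw [← p.support_sum_monomial_coeff]
  refine Ideal.sum_mem _ fun m _ => ?_
  by_cases hsq : ∀ w, m w ≤ 1
  · by_cases hA' : ∀ a ∈ A, m a = 0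
    · rw [hA m hsq hA']; simp
    by_cases hB' : ∀ b ∈ B, m b = 0
    · rw [hB m hsq hB']; simp
    push_neg at hA' hB'
    obtain ⟨a, ha, ha0⟩ := hA'
    obtain ⟨b, hb, hb0⟩ := hB'
    apply Ideal.mem_sup_left
    have hab : a ≠ b := fun h => (Set.disjoint_left.mp hAB ha) (h ▸ hb)
    have hle : Finsupp.single a 1 + Finsupp.single b 1 ≤ m := by
      intro w
      simp only [Finsupp.add_apply, Finsupp.single_apply]
      by_cases hwa : a = w
      · subst hwa
        rw [if_pos rfl, if_neg (fun h => hab h.symm)]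
        omega
      · rw [if_neg hwa]
        by_cases hwb : b = w
        · subst hwb; rw [if_pos rfl]; omega
        · rw [if_neg hwb]; omega
    have key : monomial m (coeff m p)
        = (X a * X b) * monomial (m - (Finsupp.single a 1 + Finsupp.single b 1)) (coeff m p) := by
      rw [X, X, monomial_mul, monomial_mul, one_mul, one_mul,
        add_tsub_cancel_of_le hle]
    rw [key]
    exact Ideal.mul_mem_right _ _ (Ideal.subset_span ⟨(a, b), ⟨ha, hb⟩, rfl⟩)
  · push_neg at hsq
    obtain ⟨w, hw⟩ := hsq
    apply Ideal.mem_sup_right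
    have hle : Finsupp.single w 2 ≤ m := by
      intro x
      simp only [Finsupp.single_apply]
      by_cases hxw : w = x
      · subst hxw; rw [if_pos rfl]; omega
      · rw [if_neg hxw]; omega
    have key : monomial m (coeff m p)
        = (X w ^ 2) * monomial (m - Finsupp.single w 2) (coeff m p) := by
      rw [X_pow_eq_monomial, monomial_mul, one_mul, add_tsub_cancel_of_le hle]
    rw [key]
    exact Ideal.mul_mem_right _ _ (Ideal.subset_span ⟨w, rfl⟩)

variable (R) in
/-- `wdown` descends to the Weil algebras. -/
noncomputable def wkill (s : Set V) : Weil R V →ₐ[R] Weil R {v : V // v ∉ s} :=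
  Ideal.Quotient.liftₐ _ ((Ideal.Quotient.mkₐ R _).comp (wdown R s)) (by
    intro a ha
    refine RingHom.mem_ker.mp (Ideal.span_le.mpr ?_ ha)
    rintro g ⟨v, rfl⟩
    simp only [SetLike.mem_coe, RingHom.mem_ker, AlgHom.comp_apply, map_pow, wdown_X]
    by_cases h : v ∈ s
    · rw [dif_pos h]
      simp
    · rw [dif_neg h, ← map_pow, Ideal.Quotient.mkₐ_eq_mk, Ideal.Quotient.eq_zero_iff_mem]
      exact Ideal.subset_span ⟨⟨v, h⟩, rfl⟩)

lemma wkill_mk (s : Set V) (p : MvPolynomial V R) :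
    wkill R s (Ideal.Quotient.mk (sqIdeal R V) p)
      = Ideal.Quotient.mk (sqIdeal R {v : V // v ∉ s}) (wdown R s p) := by
  simp [wkill, Ideal.Quotient.liftₐ_apply, Ideal.Quotient.lift_mk]
  rfl

variable (R) in
/-- renaming along any map descends to the Weil algebras. -/
noncomputable def wrename {σ τ : Type*} (f : σ → τ) : Weil R σ →ₐ[R] Weil R τ :=
  Ideal.Quotient.liftₐ _ ((Ideal.Quotient.mkₐ R _).comp (rename f)) (by
    intro a ha
    refine RingHom.mem_ker.mp (Ideal.span_le.mpr ?_ ha)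
    rintro g ⟨v, rfl⟩
    simp only [SetLike.mem_coe, RingHom.mem_ker, AlgHom.comp_apply, map_pow, rename_X]
    rw [← map_pow, Ideal.Quotient.mkₐ_eq_mk, Ideal.Quotient.eq_zero_iff_mem]
    exact Ideal.subset_span ⟨f v, rfl⟩)

lemma wrename_mk {σ τ : Type*} (f : σ → τ) (p : MvPolynomial σ R) :
    wrename R f (Ideal.Quotient.mk (sqIdeal R σ) p)
      = Ideal.Quotient.mk (sqIdeal R τ) (rename f p) := by
  simp [wrename, Ideal.Quotient.liftₐ_apply, Ideal.Quotient.lift_mk]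
  rfl

lemma wext {σ : Type*} {S : Type*} [Semiring S] [Algebra R S]
    {f g : Weil R σ →ₐ[R] S}
    (h : ∀ v : σ, f (Ideal.Quotient.mk (sqIdeal R σ) (X v))
      = g (Ideal.Quotient.mk (sqIdeal R σ) (X v))) : f = g := by
  refine Ideal.Quotient.algHom_ext _ (MvPolynomial.algHom_ext fun v => ?_)
  simpa [Ideal.Quotient.mkₐ_eq_mk] using h v

lemma wrename_mk_X {σ τ : Type*} (f : σ → τ) (t : σ) :
    wrename R f (Ideal.Quotient.mk (sqIdeal R σ) (X t))
      = Ideal.Quotient.mk (sqIdeal R τ) (X (f t)) := by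
  rw [wrename_mk, rename_X]

end aux

/-- Let `A, B` be disjoint subsets of the finite set `V`, let `I` be the ideal of `W(V)`
generated by the products `x_a·x_b` (`a ∈ A`, `b ∈ B`), and let
`κ_A : W(V) → W(V∖A)`, `κ_B : W(V) → W(V∖B)`, `ρ_A : W(V∖A) → W(V∖(A∪B))`,
`ρ_B : W(V∖B) → W(V∖(A∪B))` be the `R`-algebra maps killing the indicated blocks of
variables and fixing the others. Then for any `u ∈ W(V∖A)` and `v ∈ W(V∖B)` with
`ρ_A u = ρ_B v`, there exists `w ∈ W(V)` with `κ_A w = u` and `κ_B w = v`, and `w` is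
unique modulo the ideal `I`. -/
theorem weil_fiberProduct {R : Type*} [CommRing R] {V : Type*} [Fintype V]
    (A B : Set V) (hAB : Disjoint A B)
    (κA : Weil R V →ₐ[R] Weil R {v : V // v ∉ A})
    (hκA₀ : ∀ v : V, v ∈ A → κA (Ideal.Quotient.mk (sqIdeal R V) (X v)) = 0)
    (hκA₁ : ∀ (v : V) (hv : v ∉ A), κA (Ideal.Quotient.mk (sqIdeal R V) (X v)) =
      Ideal.Quotient.mk (sqIdeal R {v : V // v ∉ A}) (X ⟨v, hv⟩))
    (κB : Weil R V →ₐ[R] Weil R {v : V // v ∉ B})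
    (hκB₀ : ∀ v : V, v ∈ B → κB (Ideal.Quotient.mk (sqIdeal R V) (X v)) = 0)
    (hκB₁ : ∀ (v : V) (hv : v ∉ B), κB (Ideal.Quotient.mk (sqIdeal R V) (X v)) =
      Ideal.Quotient.mk (sqIdeal R {v : V // v ∉ B}) (X ⟨v, hv⟩))
    (ρA : Weil R {v : V // v ∉ A} →ₐ[R] Weil R {v : V // v ∉ A ∪ B})
    (hρA₀ : ∀ (v : V) (hv : v ∉ A), v ∈ B →
      ρA (Ideal.Quotient.mk (sqIdeal R {v : V // v ∉ A}) (X ⟨v, hv⟩)) = 0)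
    (hρA₁ : ∀ (v : V) (hv : v ∉ A) (hv' : v ∉ A ∪ B),
      ρA (Ideal.Quotient.mk (sqIdeal R {v : V // v ∉ A}) (X ⟨v, hv⟩)) =
        Ideal.Quotient.mk (sqIdeal R {v : V // v ∉ A ∪ B}) (X ⟨v, hv'⟩))
    (ρB : Weil R {v : V // v ∉ B} →ₐ[R] Weil R {v : V // v ∉ A ∪ B})
    (hρB₀ : ∀ (v : V) (hv : v ∉ B), v ∈ A →
      ρB (Ideal.Quotient.mk (sqIdeal R {v : V // v ∉ B}) (X ⟨v, hv⟩)) = 0)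
    (hρB₁ : ∀ (v : V) (hv : v ∉ B) (hv' : v ∉ A ∪ B),
      ρB (Ideal.Quotient.mk (sqIdeal R {v : V // v ∉ B}) (X ⟨v, hv⟩)) =
        Ideal.Quotient.mk (sqIdeal R {v : V // v ∉ A ∪ B}) (X ⟨v, hv'⟩))
    (u : Weil R {v : V // v ∉ A}) (v : Weil R {v : V // v ∉ B}) (huv : ρA u = ρB v) :
    ∃ w : Weil R V, (κA w = u ∧ κB w = v) ∧
      ∀ w' : Weil R V, κA w' = u → κB w' = v →
        w' - w ∈ Ideal.span ((fun p : V × V =>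
          Ideal.Quotient.mk (sqIdeal R V) (X p.1 * X p.2)) '' (A ×ˢ B)) := by
  set ιA := wrename R (Subtype.val : {v : V // v ∉ A} → V) with hιA
  set ιB := wrename R (Subtype.val : {v : V // v ∉ B} → V) with hιB
  set ι := wrename R (Subtype.val : {v : V // v ∉ A ∪ B} → V) with hι
  set σA := wrename R (fun w : {v : V // v ∉ A ∪ B} =>
    (⟨w.1, fun h => w.2 (Or.inl h)⟩ : {v : V // v ∉ A})) with hσA
  set σB := wrename R (fun w : {v : V // v ∉ A ∪ B} =>
    (⟨w.1, fun h => w.2 (Or.inr h)⟩ : {v : V // v ∉ B})) with hσB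
  have hc1 : κA.comp ιA = AlgHom.id R _ := by
    refine wext fun t => ?_
    simp only [AlgHom.comp_apply, hιA, wrename_mk_X, AlgHom.id_apply]
    exact hκA₁ t.1 t.2
  have hc2 : κA.comp ιB = σA.comp ρB := by
    refine wext fun t => ?_
    simp only [AlgHom.comp_apply, hιB, wrename_mk_X]
    by_cases h : t.1 ∈ A
    · rw [hκA₀ t.1 h, hρB₀ t.1 t.2 h, map_zero]
    · have h' : t.1 ∉ A ∪ B := fun hc => hc.elim h t.2
      rw [hκA₁ t.1 h, hρB₁ t.1 t.2 h', hσA, wrename_mk_X]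
  have hc3 : κA.comp ι = σA := by
    refine wext fun t => ?_
    simp only [AlgHom.comp_apply, hι, hσA, wrename_mk_X]
    exact hκA₁ t.1 (fun hc => t.2 (Or.inl hc))
  have hc4 : κB.comp ιB = AlgHom.id R _ := by
    refine wext fun t => ?_
    simp only [AlgHom.comp_apply, hιB, wrename_mk_X, AlgHom.id_apply]
    exact hκB₁ t.1 t.2
  have hc5 : κB.comp ιA = σB.comp ρA := by
    refine wext fun t => ?_
    simp only [AlgHom.comp_apply, hιA, wrename_mk_X]
    by_cases h : t.1 ∈ B
    · rw [hκB₀ t.1 h, hρA₀ t.1 t.2 h, map_zero]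
    · have h' : t.1 ∉ A ∪ B := fun hc => hc.elim t.2 h
      rw [hκB₁ t.1 h, hρA₁ t.1 t.2 h', hσB, wrename_mk_X]
  have hc6 : κB.comp ι = σB := by
    refine wext fun t => ?_
    simp only [AlgHom.comp_apply, hι, hσB, wrename_mk_X]
    exact hκB₁ t.1 (fun hc => t.2 (Or.inr hc))
  set w : Weil R V := ιA u + ιB v - ι (ρA u) with hw
  have hwA : κA w = u := by
    rw [hw, map_sub, map_add, ← AlgHom.comp_apply, ← AlgHom.comp_apply, ← AlgHom.comp_apply,
      hc1, hc2, hc3, AlgHom.id_apply, AlgHom.comp_apply, huv]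
    ring
  have hwB : κB w = v := by
    rw [hw, map_sub, map_add, ← AlgHom.comp_apply, ← AlgHom.comp_apply, ← AlgHom.comp_apply,
      hc4, hc5, hc6, AlgHom.id_apply, AlgHom.comp_apply]
    ring
  have hκAw : κA = wkill R A := by
    refine wext fun t => ?_
    rw [wkill_mk, wdown_X]
    by_cases h : t ∈ A
    · rw [dif_pos h, map_zero]; exact hκA₀ t h
    · rw [dif_neg h]; exact hκA₁ t h
  have hκBw : κB = wkill R B := by
    refine wext fun t => ?_
    rw [wkill_mk, wdown_X]
    by_cases h : t ∈ B
    · rw [dif_pos h, map_zero]; exact hκB₀ t h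
    · rw [dif_neg h]; exact hκB₁ t h
  refine ⟨w, ⟨hwA, hwB⟩, fun w' h1 h2 => ?_⟩
  obtain ⟨p, hp⟩ := Ideal.Quotient.mk_surjective (w' - w)
  have hA0 : κA (Ideal.Quotient.mk (sqIdeal R V) p) = 0 := by
    rw [hp, map_sub, h1, hwA, sub_self]
  have hB0 : κB (Ideal.Quotient.mk (sqIdeal R V) p) = 0 := by
    rw [hp, map_sub, h2, hwB, sub_self]
  rw [hκAw, wkill_mk, Ideal.Quotient.eq_zero_iff_mem] at hA0
  rw [hκBw, wkill_mk, Ideal.Quotient.eq_zero_iff_mem] at hB0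
  rw [← hp]
  have himg : ((fun pr : V × V =>
        Ideal.Quotient.mk (sqIdeal R V) (X pr.1 * X pr.2)) '' (A ×ˢ B))
      = (Ideal.Quotient.mk (sqIdeal R V)) ''
        ((fun q : V × V => (X q.1 * X q.2 : MvPolynomial V R)) '' (A ×ˢ B)) := by
    rw [Set.image_image]
  rw [himg, ← Ideal.map_span, Ideal.mem_quotient_iff_mem_sup]
  refine mem_sup_of_coeffs hAB (fun m hm hmA => ?_) (fun m hm hmB => ?_)
  · exact coeff_eq_zero_of_wdown_mem A hA0 hm hmA
  · exact coeff_eq_zero_of_wdown_mem B hB0 hm hmB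
end

section
/- Let R be a commutative ring and let W = R[x₁,x₂,x₃,x₄]/(x₁²,x₂²,x₃²,x₄²). For each permutation σ of {1,2,3,4} let θ^σ ∈ W, with coefficient family (a_S^σ)_{S⊆{1,2,3,4}} defined by θ^σ = Σ_S a_S^σ ∏_{i∈S} x_i. Then the following are equivalent: (i) for every permutation σ, every position k ∈ {1,2,3}, with i = σ(k), j = σ(k+1), and τ the permutation obtained from σ by interchanging the adjacent entries in positions k and k+1 of the word σ(1)σ(2)σ(3)σ(4), the difference θ^σ − θ^τ lies in the ideal of W generated by x_i·x_j; (ii) for every subset S ⊆ {1,2,3,4} and all permutations σ, τ that induce the same relative order on S (i.e., for all i, i' ∈ S, σ⁻¹(i) < σ⁻¹(i') if and only if τ⁻¹(i) < τ⁻¹(i')), one has a_S^σ = a_S^τ. -/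
open MvPolynomial

/-- The ideal `(x₁², x₂², x₃², x₄²)` of `R[x₁,x₂,x₃,x₄]` (variables indexed by `Fin 4`):
the quotient by it is the Weil algebra `W`, the function algebra of `D⁴`. -/
noncomputable def sqIdeal4 (R : Type*) [CommRing R] : Ideal (MvPolynomial (Fin 4) R) :=
  Ideal.span (Set.range fun v : Fin 4 => X v ^ 2)

/- combinatorial helpers -/
private def inv4 (f : Equiv.Perm (Fin 4)) : ℕ :=
  (Finset.univ.filter (fun p : Fin 4 × Fin 4 => p.1 < p.2 ∧ f p.2 < f p.1)).card

private theorem D1 : ∀ f : Equiv.Perm (Fin 4), ∀ k : Fin 3,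
    f k.succ < f k.castSucc → inv4 (f * Equiv.swap k.castSucc k.succ) < inv4 f := by decide

private theorem D3 : ∀ f : Equiv.Perm (Fin 4), f ≠ 1 → ∃ k : Fin 3, f k.succ < f k.castSucc := by
  decide

private theorem swap_pres : ∀ (k : Fin 3) (p q : Fin 4), ¬(p = k.castSucc ∧ q = k.succ) →
    ¬(q = k.castSucc ∧ p = k.succ) →
    (Equiv.swap k.castSucc k.succ p < Equiv.swap k.castSucc k.succ q ↔ p < q) := by decide

/- coefficient helpers -/
section Coeff
variable {R : Type*} [CommRing R]

private noncomputable def mS (S : Finset (Fin 4)) : Fin 4 →₀ ℕ := ∑ v ∈ S, Finsupp.single v 1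

private lemma mS_apply (S : Finset (Fin 4)) (v : Fin 4) :
    mS S v = if v ∈ S then 1 else 0 := by
  classical
  simp [mS, Finsupp.finset_sum_apply, Finsupp.single_apply, Finset.sum_ite_eq' S v fun _ => 1]

private lemma mS_inj {S T : Finset (Fin 4)} (h : mS S = mS T) : S = T := by
  ext v
  have h2 : mS S v = mS T v := by rw [h]
  simp only [mS_apply] at h2
  by_cases hS : v ∈ S <;> by_cases hT : v ∈ T <;> simp_all

private lemma mS_insert (a : Fin 4) (s : Finset (Fin 4)) (h : a ∉ s) :
    mS (insert a s) = Finsupp.single a 1 + mS s := Finset.sum_insert h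

private lemma prod_X_eq (S : Finset (Fin 4)) :
    (∏ v ∈ S, X v : MvPolynomial (Fin 4) R) = monomial (mS S) 1 := by
  classical
  induction S using Finset.induction with
  | empty => simp [mS]
  | insert _ _ h ih =>
    rw [Finset.prod_insert h, ih, X, monomial_mul, one_mul, mS_insert _ _ h]

private lemma coeff_prod (S T : Finset (Fin 4)) (c : R) :
    coeff (mS S) (C c * ∏ v ∈ T, X v) = if T = S then c else 0 := by
  classical
  rw [prod_X_eq, C_mul_monomial, mul_one, coeff_monomial]
  by_cases h : T = S
  · simp [h]
  · rw [if_neg (fun hm => h (mS_inj hm)), if_neg h]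

private lemma coeff_sum_eq (c : Finset (Fin 4) → R) (S : Finset (Fin 4)) :
    coeff (mS S) (∑ T : Finset (Fin 4), C (c T) * ∏ v ∈ T, X v) = c S := by
  classical
  rw [MvPolynomial.coeff_sum]
  simp only [coeff_prod]
  simp

private lemma mS_erase (S : Finset (Fin 4)) (v : Fin 4) (hv : v ∈ S) :
    mS S - Finsupp.single v 1 = mS (S.erase v) := by
  classical
  ext u
  rw [Finsupp.tsub_apply, mS_apply, mS_apply, Finsupp.single_apply]
  rcases eq_or_ne u v with rfl | h
  · simp [hv]
  · simp [Finset.mem_erase, h, Ne.symm h]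

private lemma mem_support_mS (S : Finset (Fin 4)) (v : Fin 4) :
    v ∈ (mS S).support ↔ v ∈ S := by
  rw [Finsupp.mem_support_iff, mS_apply]
  by_cases h : v ∈ S <;> simp [h]

private lemma coeff_mul_sq (S : Finset (Fin 4)) (v : Fin 4) (q : MvPolynomial (Fin 4) R) :
    coeff (mS S) (q * X v ^ 2) = 0 := by
  classical
  rw [sq, ← mul_assoc, coeff_mul_X']
  by_cases h : v ∈ (mS S).support
  · rw [if_pos h, mS_erase S v ((mem_support_mS S v).1 h), coeff_mul_X',
      if_neg (fun hc => (Finset.notMem_erase v S) ((mem_support_mS _ v).1 hc))]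
  · rw [if_neg h]

private lemma coeff_mul_XX (S : Finset (Fin 4)) (i j : Fin 4) (hS : ¬(i ∈ S ∧ j ∈ S))
    (q : MvPolynomial (Fin 4) R) : coeff (mS S) (q * (X i * X j)) = 0 := by
  classical
  rw [← mul_assoc, coeff_mul_X']
  by_cases hj : j ∈ (mS S).support
  · have hjS := (mem_support_mS S j).1 hj
    have hiS : i ∉ S := fun hi => hS ⟨hi, hjS⟩
    rw [if_pos hj, mS_erase S j hjS, coeff_mul_X',
      if_neg (fun hc => hiS (Finset.mem_of_mem_erase ((mem_support_mS _ i).1 hc)))]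
  · rw [if_neg hj]

/-- membership characterization -/
private lemma mem_char (i j : Fin 4) (hij : i ≠ j) (c : Finset (Fin 4) → R) :
    (Ideal.Quotient.mk (sqIdeal4 R) (∑ S : Finset (Fin 4), C (c S) * ∏ v ∈ S, X v) ∈
      Ideal.span {Ideal.Quotient.mk (sqIdeal4 R) (X i * X j)}) ↔
    ∀ S : Finset (Fin 4), ¬(i ∈ S ∧ j ∈ S) → c S = 0 := by
  classical
  constructor
  · intro hmem S hS
    have hsp : Ideal.span {Ideal.Quotient.mk (sqIdeal4 R) (X i * X j)} =
        (Ideal.span {(X i * X j : MvPolynomial (Fin 4) R)}).map (Ideal.Quotient.mk (sqIdeal4 R)) := by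
      rw [Ideal.map_span, Set.image_singleton]
    rw [hsp, Ideal.mem_quotient_iff_mem_sup, sqIdeal4, ← Ideal.span_union] at hmem
    have key : ∀ x ∈ Ideal.span ({(X i * X j : MvPolynomial (Fin 4) R)} ∪
        Set.range fun v : Fin 4 => X v ^ 2), ∀ q, coeff (mS S) (q * x) = 0 := by
      intro x hx
      refine Submodule.span_induction ?_ ?_ ?_ ?_ hx
      · rintro y (rfl | ⟨v, rfl⟩)
        · exact coeff_mul_XX S i j hS
        · exact fun q => coeff_mul_sq S v q
      · intro q; simp
      · intro y z _ _ hy hz q; rw [mul_add, coeff_add, hy, hz, add_zero]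
      · intro r y _ hy q
        rw [smul_eq_mul, ← mul_assoc]
        exact hy (q * r)
    have := key _ hmem 1
    rwa [one_mul, coeff_sum_eq] at this
  · intro h
    rw [Ideal.mem_span_singleton]
    refine map_dvd _ ?_
    refine Finset.dvd_sum fun S _ => ?_
    by_cases hS : i ∈ S ∧ j ∈ S
    · have hj : j ∈ S.erase i := Finset.mem_erase.2 ⟨fun hh => hij hh.symm, hS.2⟩
      refine ⟨C (c S) * ∏ v ∈ (S.erase i).erase j, X v, ?_⟩
      rw [← Finset.mul_prod_erase S X hS.1, ← Finset.mul_prod_erase (S.erase i) X hj]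
      ring
    · rw [h S hS]; simp

end Coeff


/-- Let `W = R[x₁,x₂,x₃,x₄]/(x₁²,x₂²,x₃²,x₄²)` and, for each permutation `σ` of `{1,2,3,4}`,
let `θ^σ ∈ W` have coefficient family `a_S^σ`, i.e. `θ^σ = Σ_S a_S^σ ∏_{i∈S} x_i`.
Then the following are equivalent:
(i) for every `σ` and every position `k`, with `i = σ k`, `j = σ (k+1)` and `τ` the
permutation obtained from `σ` by interchanging the adjacent entries in positions `k`, `k+1`
of the word of `σ`, the difference `θ^σ - θ^τ` lies in the ideal generated by `x_i·x_j`;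
(ii) whenever two permutations `σ, τ` induce the same relative order on a subset `S`,
the coefficients `a_S^σ` and `a_S^τ` coincide. -/
theorem adjacent_interchange_iff_relative_order {R : Type*} [CommRing R]
    (θ : Equiv.Perm (Fin 4) → MvPolynomial (Fin 4) R ⧸ sqIdeal4 R)
    (a : Equiv.Perm (Fin 4) → Finset (Fin 4) → R)
    (hθ : ∀ σ : Equiv.Perm (Fin 4), θ σ = Ideal.Quotient.mk (sqIdeal4 R)
      (∑ S : Finset (Fin 4), C (a σ S) * ∏ i ∈ S, X i)) :
    (∀ (σ : Equiv.Perm (Fin 4)) (k : Fin 3),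
        θ σ - θ (σ * Equiv.swap k.castSucc k.succ) ∈
          Ideal.span {Ideal.Quotient.mk (sqIdeal4 R) (X (σ k.castSucc) * X (σ k.succ))}) ↔
      (∀ (S : Finset (Fin 4)) (σ τ : Equiv.Perm (Fin 4)),
        (∀ i ∈ S, ∀ i' ∈ S, (σ⁻¹ i < σ⁻¹ i' ↔ τ⁻¹ i < τ⁻¹ i')) → a σ S = a τ S) := by
  classical
  have hdiff : ∀ σ τ : Equiv.Perm (Fin 4), θ σ - θ τ = Ideal.Quotient.mk (sqIdeal4 R)
      (∑ S : Finset (Fin 4), C (a σ S - a τ S) * ∏ i ∈ S, X i) := by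
    intro σ τ
    rw [hθ σ, hθ τ, ← map_sub, ← Finset.sum_sub_distrib]
    congr 1
    refine Finset.sum_congr rfl fun S _ => ?_
    rw [C_sub, sub_mul]
  have hne : ∀ (σ : Equiv.Perm (Fin 4)) (k : Fin 3), σ k.castSucc ≠ σ k.succ :=
    fun σ k h => (Fin.castSucc_lt_succ (i := k)).ne (σ.injective h)
  -- restate condition (i)
  have hi_iff : ∀ (σ : Equiv.Perm (Fin 4)) (k : Fin 3),
      (θ σ - θ (σ * Equiv.swap k.castSucc k.succ) ∈
        Ideal.span {Ideal.Quotient.mk (sqIdeal4 R) (X (σ k.castSucc) * X (σ k.succ))}) ↔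
      ∀ S : Finset (Fin 4), ¬(σ k.castSucc ∈ S ∧ σ k.succ ∈ S) →
        a σ S = a (σ * Equiv.swap k.castSucc k.succ) S := by
    intro σ k
    rw [hdiff, mem_char _ _ (hne σ k)]
    constructor
    · intro h S hS; exact sub_eq_zero.1 (h S hS)
    · intro h S hS; exact sub_eq_zero.2 (h S hS)
  constructor
  · intro h1 S σ τ hord
    have main : ∀ n : ℕ, ∀ σ : Equiv.Perm (Fin 4), inv4 (τ⁻¹ * σ) = n →
        (∀ i ∈ S, ∀ i' ∈ S, (σ⁻¹ i < σ⁻¹ i' ↔ τ⁻¹ i < τ⁻¹ i')) → a σ S = a τ S := by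
      intro n
      induction n using Nat.strong_induction_on with
      | _ n ih =>
        intro σ hn hord
        by_cases hστ : σ = τ
        · rw [hστ]
        · have hf : τ⁻¹ * σ ≠ 1 := by
            intro hc
            exact hστ (by rw [← one_mul σ, ← mul_inv_cancel τ, mul_assoc, hc, mul_one])
          obtain ⟨k, hk⟩ := D3 _ hf
          have hk' : τ⁻¹ (σ k.succ) < τ⁻¹ (σ k.castSucc) := hk
          -- not both in S
          have hboth : ¬(σ k.castSucc ∈ S ∧ σ k.succ ∈ S) := by
            rintro ⟨h1', h2'⟩
            have := (hord _ h1' _ h2').1 (by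
              rw [show ∀ x : Fin 4, σ⁻¹ (σ x) = x from fun x => Equiv.Perm.inv_eq_iff_eq.mpr rfl, show ∀ x : Fin 4, σ⁻¹ (σ x) = x from fun x => Equiv.Perm.inv_eq_iff_eq.mpr rfl]
              exact Fin.castSucc_lt_succ (i := k))
            exact absurd hk' (asymm this)
          set σ' := σ * Equiv.swap k.castSucc k.succ with hσ'
          have hstep : a σ S = a σ' S := (hi_iff σ k).1 (h1 σ k) S hboth
          have hinvσ' : ∀ i : Fin 4, σ'⁻¹ i = Equiv.swap k.castSucc k.succ (σ⁻¹ i) := by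
            intro i
            rw [hσ', mul_inv_rev, Equiv.Perm.mul_apply, Equiv.swap_inv]
          have hpair : ∀ i ∈ S, ∀ i' ∈ S,
              ¬(σ⁻¹ i = k.castSucc ∧ σ⁻¹ i' = k.succ) := by
            intro i hi i' hi' ⟨e1, e2⟩
            refine hboth ⟨?_, ?_⟩
            · rw [← e1, show σ (σ⁻¹ i) = i from (Equiv.eq_symm_apply σ).mp rfl]; exact hi
            · rw [← e2, show σ (σ⁻¹ i') = i' from (Equiv.eq_symm_apply σ).mp rfl]; exact hi'
          have hord' : ∀ i ∈ S, ∀ i' ∈ S, (σ'⁻¹ i < σ'⁻¹ i' ↔ τ⁻¹ i < τ⁻¹ i') := by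
            intro i hi i' hi'
            rw [hinvσ' i, hinvσ' i',
              swap_pres k _ _ (hpair i hi i' hi') (hpair i' hi' i hi)]
            exact hord i hi i' hi'
          have hdec : inv4 (τ⁻¹ * σ') < n := by
            rw [← hn, hσ', ← mul_assoc]
            exact D1 (τ⁻¹ * σ) k hk
          rw [hstep]
          exact ih _ hdec σ' rfl hord'
    exact main _ σ rfl hord
  · intro h2 σ k
    rw [hi_iff σ k]
    intro S hS
    refine h2 S σ (σ * Equiv.swap k.castSucc k.succ) ?_
    intro i hi i' hi'
    have hinvσ' : ∀ i : Fin 4, (σ * Equiv.swap k.castSucc k.succ)⁻¹ i =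
        Equiv.swap k.castSucc k.succ (σ⁻¹ i) := by
      intro i
      rw [mul_inv_rev, Equiv.Perm.mul_apply, Equiv.swap_inv]
    have hpair : ∀ i ∈ S, ∀ i' ∈ S, ¬(σ⁻¹ i = k.castSucc ∧ σ⁻¹ i' = k.succ) := by
      intro i hi i' hi' ⟨e1, e2⟩
      refine hS ⟨?_, ?_⟩
      · rw [← e1, show σ (σ⁻¹ i) = i from (Equiv.eq_symm_apply σ).mp rfl]; exact hi
      · rw [← e2, show σ (σ⁻¹ i') = i' from (Equiv.eq_symm_apply σ).mp rfl]; exact hi'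
    rw [hinvσ' i, hinvσ' i', swap_pres k _ _ (hpair i hi i' hi') (hpair i' hi' i hi)]
end
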